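/- arXiv:2201.09093 — 6 statements merged into one kernel-verified Lean document; each statement's English description precedes it below -/
import Mathlib

section
/- For strong digraphs G and H, each of order at least 2, the arc-strong connectivity of the Cartesian product satisfies λ(G □ H) = min{λ(G)·|V(H)|, λ(H)·|V(G)|, δ⁺(G)+δ⁺(H), δ⁻(G)+δ⁻(H)}. -/
/-- The set of arcs of a digraph. -/
def Digraph.ArcSet {V : Type*} (D : Digraph V) : Set (V × V) := {p | D.Adj p.1 p.2}

/-- Delete a set of arcs from a digraph. -/
def Digraph.DeleteArcs {V : Type*} (D : Digraph V) (F : Set (V × V)) : Digraph V :=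
  ⟨fun u v => D.Adj u v ∧ (u, v) ∉ F⟩

/-- A digraph is strong if every vertex can reach every other vertex by a directed walk. -/
def Digraph.IsStrong {V : Type*} (D : Digraph V) : Prop :=
  ∀ u v : V, Relation.ReflTransGen D.Adj u v

/-- The arc-strong connectivity: the minimum number of arcs whose removal
destroys strong connectivity. -/
noncomputable def Digraph.arcConn {V : Type*} (D : Digraph V) : ℕ :=
  sInf {k | ∃ F : Set (V × V), F ⊆ D.ArcSet ∧ F.ncard = k ∧ ¬ (D.DeleteArcs F).IsStrong}

noncomputable def Digraph.outDeg {V : Type*} (D : Digraph V) (v : V) : ℕ :=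
  {w | D.Adj v w}.ncard

noncomputable def Digraph.inDeg {V : Type*} (D : Digraph V) (v : V) : ℕ :=
  {w | D.Adj w v}.ncard

/-- Minimum out-degree. -/
noncomputable def Digraph.minOutDeg {V : Type*} (D : Digraph V) : ℕ := ⨅ v, D.outDeg v

/-- Minimum in-degree. -/
noncomputable def Digraph.minInDeg {V : Type*} (D : Digraph V) : ℕ := ⨅ v, D.inDeg v

/-- Cartesian product of digraphs. -/
def Digraph.cartProd {V W : Type*} (G : Digraph V) (H : Digraph W) : Digraph (V × W) :=
  ⟨fun a b => (G.Adj a.1 b.1 ∧ a.2 = b.2) ∨ (a.1 = b.1 ∧ H.Adj a.2 b.2)⟩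

/-- `B` is the arc set of an `S`-strong subgraph of `D`: the arcs of `B` are arcs of `D`,
and the subgraph with vertex set `S` together with all endpoints of `B`, and arc set `B`,
is strongly connected. -/
def Digraph.IsStrongSubgraphOn {V : Type*} (D : Digraph V) (S : Set V) (B : Set (V × V)) :
    Prop :=
  B ⊆ D.ArcSet ∧
  ∀ u ∈ S ∪ {v | ∃ e ∈ B, v = e.1 ∨ v = e.2},
    ∀ w ∈ S ∪ {v | ∃ e ∈ B, v = e.1 ∨ v = e.2},
      Relation.ReflTransGen (fun a b => (a, b) ∈ B) u w

/-- `λ_S(D)`: the maximum number of pairwise arc-disjoint `S`-strong subgraphs of `D`. -/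
noncomputable def Digraph.lambdaS {V : Type*} (D : Digraph V) (S : Set V) : ℕ :=
  sSup {k | ∃ f : Fin k → Set (V × V),
    (∀ i, D.IsStrongSubgraphOn S (f i)) ∧
    ∀ i j, i ≠ j → Disjoint (f i) (f j)}

/-- `λ_k(D)`: the strong subgraph `k`-arc-connectivity. -/
noncomputable def Digraph.lambdaK {V : Type*} (D : Digraph V) (k : ℕ) : ℕ :=
  sInf {m | ∃ S : Set V, S.ncard = k ∧ D.lambdaS S = m}

/-- The complete biorientation of an undirected graph. -/
def SimpleGraph.biorient {V : Type*} (G : SimpleGraph V) : Digraph V := ⟨G.Adj⟩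

/-- Edge-connectivity of an undirected graph: the minimum number of edges whose
removal disconnects the graph. -/
noncomputable def SimpleGraph.edgeConn {V : Type*} (G : SimpleGraph V) : ℕ :=
  sInf {k | ∃ F : Set (Sym2 V), F ⊆ G.edgeSet ∧ F.ncard = k ∧ ¬ (G.deleteEdges F).Connected}

/-- The directed cycle on `n` vertices. -/
def dirCycle (n : ℕ) : Digraph (Fin n) :=
  ⟨fun i j => (j : ℕ) = ((i : ℕ) + 1) % n⟩

/-- The complete biorientation of the cycle on `n` vertices. -/
def biCycle (n : ℕ) : Digraph (Fin n) :=
  ⟨fun i j => (j : ℕ) = ((i : ℕ) + 1) % n ∨ (i : ℕ) = ((j : ℕ) + 1) % n⟩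

/-- The complete digraph on `n` vertices. -/
def completeDigraph (n : ℕ) : Digraph (Fin n) := ⟨fun i j => i ≠ j⟩

open Finset
attribute [local instance] Classical.propDecidable
set_option linter.unusedSectionVars false

section Aux
variable {V : Type*} [Fintype V]

/-- The set of arcs leaving `S`, as a `Finset`. -/
noncomputable def arcCut (D : Digraph V) (S : Set V) : Finset (V × V) :=
  Finset.univ.filter fun p => p.1 ∈ S ∧ p.2 ∉ S ∧ D.Adj p.1 p.2

lemma mem_arcCut {D : Digraph V} {S : Set V} {p : V × V} :
    p ∈ arcCut D S ↔ p.1 ∈ S ∧ p.2 ∉ S ∧ D.Adj p.1 p.2 := by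
  simp [arcCut]

lemma reach_stays {D : Digraph V} {F : Set (V × V)} {S : Set V}
    (hcut : ∀ a b, a ∈ S → D.Adj a b → (a, b) ∉ F → b ∈ S)
    {u v : V} (hu : u ∈ S)
    (h : Relation.ReflTransGen (D.DeleteArcs F).Adj u v) : v ∈ S := by
  induction h with
  | refl => exact hu
  | tail _ hstep ih => exact hcut _ _ ih hstep.1 hstep.2

lemma not_strong_delete (D : Digraph V) (S : Set V) (hne : S.Nonempty) (hpr : S ≠ Set.univ) :
    ¬ (D.DeleteArcs ↑(arcCut D S)).IsStrong := by
  intro h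
  obtain ⟨u, hu⟩ := hne
  obtain ⟨v, hv⟩ : ∃ v, v ∉ S := by
    by_contra hc
    push_neg at hc
    exact hpr (Set.eq_univ_of_forall hc)
  refine hv (reach_stays (fun a b ha hab hnot => ?_) hu (h u v))
  by_contra hb
  exact hnot (by simpa using mem_arcCut.2 ⟨ha, hb, hab⟩)

lemma arcCut_subset_arcSet (D : Digraph V) (S : Set V) :
    ↑(arcCut D S) ⊆ D.ArcSet := fun p hp => (mem_arcCut.1 (by simpa using hp)).2.2

lemma arcConn_le_cut (D : Digraph V) (S : Set V) (hne : S.Nonempty) (hpr : S ≠ Set.univ) :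
    D.arcConn ≤ (arcCut D S).card :=
  Nat.sInf_le ⟨↑(arcCut D S), arcCut_subset_arcSet D S, Set.ncard_coe_finset _,
    not_strong_delete D S hne hpr⟩

lemma exists_cut_of_not_strong (D : Digraph V) (F : Set (V × V))
    (h : ¬ (D.DeleteArcs F).IsStrong) :
    ∃ S : Set V, S.Nonempty ∧ S ≠ Set.univ ∧ (arcCut D S).card ≤ F.ncard := by
  rw [Digraph.IsStrong] at h
  push_neg at h
  obtain ⟨u, v, huv⟩ := h
  refine ⟨{x | Relation.ReflTransGen (D.DeleteArcs F).Adj u x}, ⟨u, Relation.ReflTransGen.refl⟩,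
    fun hc => huv (hc ▸ Set.mem_univ v : v ∈ _), ?_⟩
  rw [← Set.ncard_coe_finset]
  refine Set.ncard_le_ncard (fun p hp => ?_) (Set.toFinite F)
  obtain ⟨h1, h2, h3⟩ := mem_arcCut.1 (by simpa using hp)
  by_contra hpF
  exact h2 (h1.tail ⟨h3, by rwa [← Prod.mk.eta (p := p)] at hpF⟩)

lemma arcCut_nonempty (D : Digraph V) (hD : D.IsStrong) (S : Set V)
    (hne : S.Nonempty) (hpr : S ≠ Set.univ) : 1 ≤ (arcCut D S).card := by
  rcases Nat.eq_zero_or_pos (arcCut D S).card with h0 | h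
  · exfalso
    rw [Finset.card_eq_zero] at h0
    obtain ⟨u, hu⟩ := hne
    obtain ⟨v, hv⟩ : ∃ v, v ∉ S := by
      by_contra hc; push_neg at hc; exact hpr (Set.eq_univ_of_forall hc)
    refine hv (reach_stays (D := D) (F := ∅) (fun a b ha hab _ => ?_) hu ?_)
    · by_contra hb
      have : (a, b) ∈ arcCut D S := mem_arcCut.2 ⟨ha, hb, hab⟩
      simp [h0] at this
    · exact Relation.ReflTransGen.mono (p := (D.DeleteArcs ∅).Adj) (fun a b hab => ⟨hab, fun hx => hx⟩) u v (hD u v)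
  · exact h

lemma outDeg_eq_card (D : Digraph V) (v : V) :
    D.outDeg v = (Finset.univ.filter fun w => D.Adj v w).card := by
  rw [Digraph.outDeg, Set.ncard_eq_toFinset_card', Set.toFinset_setOf]

lemma inDeg_eq_card (D : Digraph V) (v : V) :
    D.inDeg v = (Finset.univ.filter fun w => D.Adj w v).card := by
  rw [Digraph.inDeg, Set.ncard_eq_toFinset_card', Set.toFinset_setOf]

lemma minOutDeg_le (D : Digraph V) (v : V) : D.minOutDeg ≤ D.outDeg v := ciInf_le' _ v

lemma minInDeg_le (D : Digraph V) (v : V) : D.minInDeg ≤ D.inDeg v := ciInf_le' _ v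

lemma exists_minOutDeg (D : Digraph V) [Nonempty V] : ∃ v, D.outDeg v = D.minOutDeg := by
  obtain ⟨v, -, hv⟩ := Finset.exists_min_image Finset.univ D.outDeg ⟨Classical.arbitrary V, mem_univ _⟩
  exact ⟨v, le_antisymm (le_ciInf fun w => hv w (mem_univ _)) (minOutDeg_le D v)⟩

lemma exists_minInDeg (D : Digraph V) [Nonempty V] : ∃ v, D.inDeg v = D.minInDeg := by
  obtain ⟨v, -, hv⟩ := Finset.exists_min_image Finset.univ D.inDeg ⟨Classical.arbitrary V, mem_univ _⟩
  exact ⟨v, le_antisymm (le_ciInf fun w => hv w (mem_univ _)) (minInDeg_le D v)⟩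

/-- out-degree bound: `δ⁺ + 1 ≤ cut + |S|` for a vertex in S. -/
lemma outDeg_le_cut_add (D : Digraph V) (hirr : Irreflexive D.Adj) {S : Set V} {a : V}
    (ha : a ∈ S) : D.outDeg a + 1 ≤ (arcCut D S).card + S.ncard := by
  have hsub : (Finset.univ.filter fun w => D.Adj a w) ⊆
      S.toFinset.erase a ∪ (arcCut D S).image Prod.snd := by
    intro w hw
    simp only [mem_filter, mem_univ, true_and] at hw
    by_cases hwS : w ∈ S
    · exact mem_union_left _ (Finset.mem_erase.2 ⟨fun h => hirr a (h ▸ hw), Set.mem_toFinset.2 hwS⟩)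
    · exact mem_union_right _ (Finset.mem_image.2 ⟨(a, w), mem_arcCut.2 ⟨ha, hwS, hw⟩, rfl⟩)
  have h1 := (Finset.card_le_card hsub).trans (Finset.card_union_le _ _)
  have h2 : (S.toFinset.erase a).card = S.toFinset.card - 1 :=
    Finset.card_erase_of_mem (Set.mem_toFinset.2 ha)
  have h3 : ((arcCut D S).image Prod.snd).card ≤ (arcCut D S).card := Finset.card_image_le
  have h4 : 1 ≤ S.toFinset.card := Finset.card_pos.2 ⟨a, Set.mem_toFinset.2 ha⟩
  rw [outDeg_eq_card, Set.ncard_eq_toFinset_card']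
  omega

end Aux

section ProdAux
variable {V W : Type*} [Fintype V] [Fintype W]

def rowS (S : Set (V × W)) (w : W) : Set V := {v | (v, w) ∈ S}
def colS (S : Set (V × W)) (v : V) : Set W := {w | (v, w) ∈ S}

lemma cut_sum_le (G : Digraph V) (H : Digraph W) (S : Set (V × W)) :
    (∑ w : W, (arcCut G (rowS S w)).card) + (∑ v : V, (arcCut H (colS S v)).card)
      ≤ (arcCut (G.cartProd H) S).card := by
  set rowIm : W → Finset ((V × W) × (V × W)) :=
    fun w => (arcCut G (rowS S w)).image (fun p => ((p.1, w), (p.2, w))) with hrowIm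
  set colIm : V → Finset ((V × W) × (V × W)) :=
    fun v => (arcCut H (colS S v)).image (fun p => ((v, p.1), (v, p.2))) with hcolIm
  have hrowmem : ∀ w q, q ∈ rowIm w →
      q ∈ arcCut (G.cartProd H) S ∧ q.1.2 = w ∧ q.2.2 = w ∧ q.1.1 ≠ q.2.1 := by
    intro w q hq
    rw [hrowIm, Finset.mem_image] at hq
    obtain ⟨p, hp, rfl⟩ := hq
    obtain ⟨h1, h2, h3⟩ := mem_arcCut.1 hp
    refine ⟨mem_arcCut.2 ⟨h1, h2, Or.inl ⟨h3, rfl⟩⟩, rfl, rfl, fun h => h2 ?_⟩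
    have h' : p.1 = p.2 := h
    exact h' ▸ h1
  have hcolmem : ∀ v q, q ∈ colIm v →
      q ∈ arcCut (G.cartProd H) S ∧ q.1.1 = v ∧ q.2.1 = v ∧ q.1.2 ≠ q.2.2 := by
    intro v q hq
    rw [hcolIm, Finset.mem_image] at hq
    obtain ⟨p, hp, rfl⟩ := hq
    obtain ⟨h1, h2, h3⟩ := mem_arcCut.1 hp
    refine ⟨mem_arcCut.2 ⟨h1, h2, Or.inr ⟨rfl, h3⟩⟩, rfl, rfl, fun h => h2 ?_⟩
    have h' : p.1 = p.2 := h
    exact h' ▸ h1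
  have hsub : univ.biUnion rowIm ∪ univ.biUnion colIm ⊆ arcCut (G.cartProd H) S := by
    intro q hq
    rcases Finset.mem_union.1 hq with h | h
    · obtain ⟨w, -, hw⟩ := Finset.mem_biUnion.1 h
      exact (hrowmem w q hw).1
    · obtain ⟨v, -, hv⟩ := Finset.mem_biUnion.1 h
      exact (hcolmem v q hv).1
  have hrowdisj : ∀ w ∈ univ, ∀ w' ∈ univ, w ≠ w' → Disjoint (rowIm w) (rowIm w') := by
    intro w _ w' _ hne
    rw [Finset.disjoint_left]
    intro q hq hq'
    exact hne ((hrowmem w q hq).2.1 ▸ (hrowmem w' q hq').2.1.symm ▸ rfl)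
  have hcoldisj : ∀ v ∈ univ, ∀ v' ∈ univ, v ≠ v' → Disjoint (colIm v) (colIm v') := by
    intro v _ v' _ hne
    rw [Finset.disjoint_left]
    intro q hq hq'
    exact hne ((hcolmem v q hq).2.1 ▸ (hcolmem v' q hq').2.1.symm ▸ rfl)
  have hrc : Disjoint (univ.biUnion rowIm) (univ.biUnion colIm) := by
    rw [Finset.disjoint_left]
    intro q hq hq'
    obtain ⟨w, -, hw⟩ := Finset.mem_biUnion.1 hq
    obtain ⟨v, -, hv⟩ := Finset.mem_biUnion.1 hq'
    exact (hrowmem w q hw).2.2.2 ((hcolmem v q hv).2.1.trans (hcolmem v q hv).2.2.1.symm)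
  have hinjrow : ∀ w : W, Function.Injective (fun p : V × V => ((p.1, w), (p.2, w))) := by
    intro w p p' h
    simp only [Prod.mk.injEq] at h
    exact Prod.ext h.1.1 h.2.1
  have hinjcol : ∀ v : V, Function.Injective (fun p : W × W => ((v, p.1), (v, p.2))) := by
    intro v p p' h
    simp only [Prod.mk.injEq] at h
    exact Prod.ext h.1.2 h.2.2
  calc (∑ w : W, (arcCut G (rowS S w)).card) + (∑ v : V, (arcCut H (colS S v)).card)
      = (univ.biUnion rowIm ∪ univ.biUnion colIm).card := by
        rw [Finset.card_union_of_disjoint hrc, Finset.card_biUnion hrowdisj,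
          Finset.card_biUnion hcoldisj]
        congr 1
        · exact Finset.sum_congr rfl fun w _ => (Finset.card_image_of_injective _ (hinjrow w)).symm
        · exact Finset.sum_congr rfl fun v _ => (Finset.card_image_of_injective _ (hinjcol v)).symm
    _ ≤ (arcCut (G.cartProd H) S).card := Finset.card_le_card hsub

end ProdAux

section CaseSmall
variable {V W : Type*} [Fintype V] [Fintype W]

lemma case_small (G : Digraph V) (H : Digraph W)
    (hGl : Irreflexive G.Adj) (hHl : Irreflexive H.Adj)
    (hG : G.IsStrong) (hH : H.IsStrong)
    (S : Set (V × W)) (hSne : S.Nonempty)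
    {w₀ : W} (hw₀ : rowS S w₀ = ∅) {v₀ : V} (hv₀ : colS S v₀ = ∅) :
    G.minOutDeg + H.minOutDeg ≤ (arcCut (G.cartProd H) S).card := by
  obtain ⟨⟨v₁, w₁⟩, hmem⟩ := hSne
  have hv₁ : v₁ ∈ rowS S w₁ := hmem
  have hw₁ : w₁ ∈ colS S v₁ := hmem
  -- every row indexed by the column of v₁ is nonempty and proper
  have hrow : ∀ w ∈ colS S v₁, (rowS S w).Nonempty ∧ rowS S w ≠ Set.univ := by
    intro w hw
    refine ⟨⟨v₁, hw⟩, fun hc => ?_⟩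
    have : v₀ ∈ rowS S w := hc ▸ Set.mem_univ v₀
    exact absurd (this : (v₀, w) ∈ S) (by simp [colS, Set.eq_empty_iff_forall_notMem] at hv₀; exact hv₀ w)
  have hcol : ∀ v ∈ rowS S w₁, (colS S v).Nonempty ∧ colS S v ≠ Set.univ := by
    intro v hv
    refine ⟨⟨w₁, hv⟩, fun hc => ?_⟩
    have : w₀ ∈ colS S v := hc ▸ Set.mem_univ w₀
    exact absurd (this : (v, w₀) ∈ S) (by simp [rowS, Set.eq_empty_iff_forall_notMem] at hw₀; exact hw₀ v)
  set T : Finset W := (colS S v₁).toFinset with hT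
  set R : Finset V := (rowS S w₁).toFinset with hR
  have hw₁T : w₁ ∈ T := Set.mem_toFinset.2 hw₁
  have hv₁R : v₁ ∈ R := Set.mem_toFinset.2 hv₁
  -- row sum bound
  have hrowsum : (arcCut G (rowS S w₁)).card + (T.card - 1) ≤
      ∑ w : W, (arcCut G (rowS S w)).card := by
    have h1 : ∑ w ∈ T, (arcCut G (rowS S w)).card ≤ ∑ w : W, (arcCut G (rowS S w)).card :=
      Finset.sum_le_sum_of_subset (Finset.subset_univ T)
    have h2 : ∑ w ∈ T.erase w₁, (arcCut G (rowS S w)).card + (arcCut G (rowS S w₁)).card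
        = ∑ w ∈ T, (arcCut G (rowS S w)).card := Finset.sum_erase_add T _ hw₁T
    have h3 : (T.erase w₁).card • 1 ≤ ∑ w ∈ T.erase w₁, (arcCut G (rowS S w)).card := by
      refine Finset.card_nsmul_le_sum _ _ _ fun w hw => ?_
      have hwT := Set.mem_toFinset.1 (Finset.mem_of_mem_erase hw)
      exact arcCut_nonempty G hG _ (hrow w hwT).1 (hrow w hwT).2
    have h4 : (T.erase w₁).card = T.card - 1 := Finset.card_erase_of_mem hw₁T
    simp only [smul_eq_mul, mul_one] at h3
    omega
  have hcolsum : (arcCut H (colS S v₁)).card + (R.card - 1) ≤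
      ∑ v : V, (arcCut H (colS S v)).card := by
    have h1 : ∑ v ∈ R, (arcCut H (colS S v)).card ≤ ∑ v : V, (arcCut H (colS S v)).card :=
      Finset.sum_le_sum_of_subset (Finset.subset_univ R)
    have h2 : ∑ v ∈ R.erase v₁, (arcCut H (colS S v)).card + (arcCut H (colS S v₁)).card
        = ∑ v ∈ R, (arcCut H (colS S v)).card := Finset.sum_erase_add R _ hv₁R
    have h3 : (R.erase v₁).card • 1 ≤ ∑ v ∈ R.erase v₁, (arcCut H (colS S v)).card := by
      refine Finset.card_nsmul_le_sum _ _ _ fun v hv => ?_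
      have hvR := Set.mem_toFinset.1 (Finset.mem_of_mem_erase hv)
      exact arcCut_nonempty H hH _ (hcol v hvR).1 (hcol v hvR).2
    have h4 : (R.erase v₁).card = R.card - 1 := Finset.card_erase_of_mem hv₁R
    simp only [smul_eq_mul, mul_one] at h3
    omega
  have hdegG : G.outDeg v₁ + 1 ≤ (arcCut G (rowS S w₁)).card + R.card := by
    have := outDeg_le_cut_add G hGl (S := rowS S w₁) hv₁
    rwa [Set.ncard_eq_toFinset_card'] at this
  have hdegH : H.outDeg w₁ + 1 ≤ (arcCut H (colS S v₁)).card + T.card := by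
    have := outDeg_le_cut_add H hHl (S := colS S v₁) hw₁
    rwa [Set.ncard_eq_toFinset_card'] at this
  have hminG := minOutDeg_le G v₁
  have hminH := minOutDeg_le H w₁
  have htot := cut_sum_le G H S
  have hT1 : 1 ≤ T.card := Finset.card_pos.2 ⟨w₁, hw₁T⟩
  have hR1 : 1 ≤ R.card := Finset.card_pos.2 ⟨v₁, hv₁R⟩
  omega

end CaseSmall

section Rev
variable {V W : Type*} [Fintype V] [Fintype W]

def revD (D : Digraph V) : Digraph V := ⟨fun u v => D.Adj v u⟩

lemma revD_adj {D : Digraph V} {u v : V} : (revD D).Adj u v ↔ D.Adj v u := Iff.rfl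

lemma cartProd_adj {G : Digraph V} {H : Digraph W} {a b : V × W} :
    (G.cartProd H).Adj a b ↔ (G.Adj a.1 b.1 ∧ a.2 = b.2) ∨ (a.1 = b.1 ∧ H.Adj a.2 b.2) :=
  Iff.rfl

lemma revD_strong {D : Digraph V} (h : D.IsStrong) : (revD D).IsStrong := fun u v =>
  Relation.reflTransGen_swap.2 (h v u)

lemma revD_irrefl {D : Digraph V} (h : Irreflexive D.Adj) : Irreflexive (revD D).Adj :=
  fun a ha => h a ha

lemma minOutDeg_revD (D : Digraph V) : (revD D).minOutDeg = D.minInDeg := rfl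

lemma rowS_compl (S : Set (V × W)) (w : W) : rowS Sᶜ w = (rowS S w)ᶜ := rfl
lemma colS_compl (S : Set (V × W)) (v : V) : colS Sᶜ v = (colS S v)ᶜ := rfl

lemma card_arcCut_rev_prod (G : Digraph V) (H : Digraph W) (S : Set (V × W)) :
    (arcCut ((revD G).cartProd (revD H)) Sᶜ).card = (arcCut (G.cartProd H) S).card := by
  have him : arcCut ((revD G).cartProd (revD H)) Sᶜ
      = (arcCut (G.cartProd H) S).image Prod.swap := by
    ext ⟨a, b⟩
    simp only [mem_arcCut, Finset.mem_image, cartProd_adj, revD_adj, Set.mem_compl_iff,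
      not_not]
    constructor
    · rintro ⟨h1, h2, h3⟩
      refine ⟨(b, a), ⟨h2, h1, ?_⟩, rfl⟩
      rcases h3 with ⟨hA, hE⟩ | ⟨hE, hA⟩
      · exact Or.inl ⟨hA, hE.symm⟩
      · exact Or.inr ⟨hE.symm, hA⟩
    · rintro ⟨⟨c, d⟩, ⟨h1, h2, h3⟩, heq⟩
      obtain ⟨rfl, rfl⟩ : d = a ∧ c = b := by
        simpa [Prod.ext_iff, Prod.swap] using heq
      refine ⟨h2, h1, ?_⟩
      rcases h3 with ⟨hA, hE⟩ | ⟨hE, hA⟩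
      · exact Or.inl ⟨hA, hE.symm⟩
      · exact Or.inr ⟨hE.symm, hA⟩
  rw [him, Finset.card_image_of_injective _ Prod.swap_injective]

end Rev

section Lower
variable {V W : Type*} [Fintype V] [Fintype W]

lemma cut_lower (G : Digraph V) (H : Digraph W)
    (hGl : Irreflexive G.Adj) (hHl : Irreflexive H.Adj)
    (hG : G.IsStrong) (hH : H.IsStrong)
    (S : Set (V × W)) (hne : S.Nonempty) (hpr : S ≠ Set.univ) :
    min (G.arcConn * Fintype.card W)
      (min (H.arcConn * Fintype.card V)
        (min (G.minOutDeg + H.minOutDeg) (G.minInDeg + H.minInDeg)))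
      ≤ (arcCut (G.cartProd H) S).card := by
  by_cases hrow : ∀ w, (rowS S w).Nonempty ∧ rowS S w ≠ Set.univ
  · refine le_trans (min_le_left _ _) ?_
    calc G.arcConn * Fintype.card W
        = Finset.univ.card • G.arcConn := by
          rw [Finset.card_univ, smul_eq_mul, mul_comm]
      _ ≤ ∑ w : W, (arcCut G (rowS S w)).card :=
          Finset.card_nsmul_le_sum _ _ _ fun w _ => arcConn_le_cut G _ (hrow w).1 (hrow w).2
      _ ≤ _ := le_trans (Nat.le_add_right _ _) (cut_sum_le G H S)
  by_cases hcol : ∀ v, (colS S v).Nonempty ∧ colS S v ≠ Set.univ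
  · refine le_trans (le_trans (min_le_right _ _) (min_le_left _ _)) ?_
    calc H.arcConn * Fintype.card V
        = Finset.univ.card • H.arcConn := by
          rw [Finset.card_univ, smul_eq_mul, mul_comm]
      _ ≤ ∑ v : V, (arcCut H (colS S v)).card :=
          Finset.card_nsmul_le_sum _ _ _ fun v _ => arcConn_le_cut H _ (hcol v).1 (hcol v).2
      _ ≤ _ := le_trans (Nat.le_add_left _ _) (cut_sum_le G H S)
  push_neg at hrow hcol
  obtain ⟨w₂, hw₂⟩ := hrow
  obtain ⟨v₂, hv₂⟩ := hcol
  have hwcase : rowS S w₂ = ∅ ∨ rowS S w₂ = Set.univ := by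
    by_cases h : (rowS S w₂).Nonempty
    · exact Or.inr (hw₂ h)
    · exact Or.inl (Set.not_nonempty_iff_eq_empty.1 h)
  have hvcase : colS S v₂ = ∅ ∨ colS S v₂ = Set.univ := by
    by_cases h : (colS S v₂).Nonempty
    · exact Or.inr (hv₂ h)
    · exact Or.inl (Set.not_nonempty_iff_eq_empty.1 h)
  rcases hwcase with hw | hw <;> rcases hvcase with hv | hv
  · -- empty row and empty column: small case
    refine le_trans (le_trans (min_le_right _ _) (le_trans (min_le_right _ _)
      (min_le_left _ _))) ?_
    exact case_small G H hGl hHl hG hH S hne hw hv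
  · -- empty row, full column: contradiction
    exfalso
    have : (v₂, w₂) ∈ S := (hv ▸ Set.mem_univ w₂ : w₂ ∈ colS S v₂)
    exact absurd (this : v₂ ∈ rowS S w₂) (show v₂ ∉ rowS S w₂ by rw [hw]; exact Set.notMem_empty v₂)
  · -- full row, empty column: contradiction
    exfalso
    have : (v₂, w₂) ∈ S := (hw ▸ Set.mem_univ v₂ : v₂ ∈ rowS S w₂)
    exact absurd (this : w₂ ∈ colS S v₂) (show w₂ ∉ colS S v₂ by rw [hv]; exact Set.notMem_empty w₂)
  · -- full row and full column: reverse
    refine le_trans (le_trans (min_le_right _ _) (le_trans (min_le_right _ _)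
      (min_le_right _ _))) ?_
    rw [← card_arcCut_rev_prod G H S]
    have hSc : Sᶜ.Nonempty := Set.nonempty_compl.2 hpr
    have hrowc : rowS Sᶜ w₂ = ∅ := by
      rw [rowS_compl, hw, Set.compl_univ]
    have hcolc : colS Sᶜ v₂ = ∅ := by
      rw [colS_compl, hv, Set.compl_univ]
    have := case_small (revD G) (revD H) (revD_irrefl hGl) (revD_irrefl hHl)
      (revD_strong hG) (revD_strong hH) Sᶜ hSc hrowc hcolc
    rwa [minOutDeg_revD, minOutDeg_revD] at this

end Lower

section Upper
variable {V W : Type*} [Fintype V] [Fintype W]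

lemma arcConn_set_nonempty (D : Digraph V) (hV : 2 ≤ Fintype.card V) :
    {k | ∃ F : Set (V × V), F ⊆ D.ArcSet ∧ F.ncard = k ∧
      ¬ (D.DeleteArcs F).IsStrong}.Nonempty := by
  have : Nonempty V := Fintype.card_pos_iff.1 (by omega)
  obtain ⟨v⟩ := this
  obtain ⟨u, hu⟩ := Fintype.exists_ne_of_one_lt_card (by omega) v
  refine ⟨(arcCut D {v}).card, ↑(arcCut D {v}), arcCut_subset_arcSet D _,
    Set.ncard_coe_finset _, not_strong_delete D {v} ⟨v, rfl⟩ ?_⟩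
  intro hc
  exact hu (hc ▸ Set.mem_univ u : u ∈ ({v} : Set V))

/-- there is a minimum cut realizing `arcConn`. -/
lemma exists_min_cut (D : Digraph V) (hV : 2 ≤ Fintype.card V) :
    ∃ S : Set V, S.Nonempty ∧ S ≠ Set.univ ∧ (arcCut D S).card ≤ D.arcConn := by
  have hmem := Nat.sInf_mem (arcConn_set_nonempty D hV)
  obtain ⟨F, -, hcard, hstr⟩ := hmem
  obtain ⟨S, h1, h2, h3⟩ := exists_cut_of_not_strong D F hstr
  exact ⟨S, h1, h2, le_trans h3 (le_of_eq hcard)⟩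

lemma upper_row (G : Digraph V) (H : Digraph W)
    (hV : 2 ≤ Fintype.card V) (hW : 2 ≤ Fintype.card W) :
    (G.cartProd H).arcConn ≤ G.arcConn * Fintype.card W := by
  have : Nonempty W := Fintype.card_pos_iff.1 (by omega)
  obtain ⟨w⟩ := this
  obtain ⟨S₀, hS₀ne, hS₀pr, hS₀card⟩ := exists_min_cut G hV
  set Sp : Set (V × W) := {p | p.1 ∈ S₀} with hSp
  have hne : Sp.Nonempty := by
    obtain ⟨v, hv⟩ := hS₀ne
    exact ⟨(v, w), hv⟩
  have hprop : Sp ≠ Set.univ := by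
    obtain ⟨u, hu⟩ : ∃ u, u ∉ S₀ := by
      by_contra hc; push_neg at hc; exact hS₀pr (Set.eq_univ_of_forall hc)
    intro hc
    exact hu (hc ▸ Set.mem_univ (u, w) : (u, w) ∈ Sp)
  refine le_trans (arcConn_le_cut _ Sp hne hprop) ?_
  have hsub : arcCut (G.cartProd H) Sp ⊆
      ((arcCut G S₀) ×ˢ (Finset.univ : Finset W)).image
        (fun q => ((q.1.1, q.2), (q.1.2, q.2))) := by
    rintro ⟨a, b⟩ hab
    obtain ⟨h1, h2, h3⟩ := mem_arcCut.1 hab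
    rcases cartProd_adj.1 h3 with ⟨hA, hE⟩ | ⟨hE, hA⟩
    · refine Finset.mem_image.2 ⟨((a.1, b.1), a.2),
        Finset.mem_product.2 ⟨mem_arcCut.2 ⟨h1, h2, hA⟩, Finset.mem_univ _⟩, ?_⟩
      exact Prod.ext rfl (Prod.ext rfl hE)
    · exact absurd (hE ▸ h1 : b.1 ∈ S₀) h2
  calc (arcCut (G.cartProd H) Sp).card
      ≤ (((arcCut G S₀) ×ˢ (Finset.univ : Finset W)).image
          (fun q => ((q.1.1, q.2), (q.1.2, q.2)))).card := Finset.card_le_card hsub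
    _ ≤ ((arcCut G S₀) ×ˢ (Finset.univ : Finset W)).card := Finset.card_image_le
    _ = (arcCut G S₀).card * Fintype.card W := by
        rw [Finset.card_product, Finset.card_univ]
    _ ≤ G.arcConn * Fintype.card W := Nat.mul_le_mul_right _ hS₀card

lemma upper_col (G : Digraph V) (H : Digraph W)
    (hV : 2 ≤ Fintype.card V) (hW : 2 ≤ Fintype.card W) :
    (G.cartProd H).arcConn ≤ H.arcConn * Fintype.card V := by
  have : Nonempty V := Fintype.card_pos_iff.1 (by omega)
  obtain ⟨v⟩ := this
  obtain ⟨T₀, hT₀ne, hT₀pr, hT₀card⟩ := exists_min_cut H hW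
  set Sp : Set (V × W) := {p | p.2 ∈ T₀} with hSp
  have hne : Sp.Nonempty := by
    obtain ⟨w, hw⟩ := hT₀ne
    exact ⟨(v, w), hw⟩
  have hprop : Sp ≠ Set.univ := by
    obtain ⟨u, hu⟩ : ∃ u, u ∉ T₀ := by
      by_contra hc; push_neg at hc; exact hT₀pr (Set.eq_univ_of_forall hc)
    intro hc
    exact hu (hc ▸ Set.mem_univ (v, u) : (v, u) ∈ Sp)
  refine le_trans (arcConn_le_cut _ Sp hne hprop) ?_
  have hsub : arcCut (G.cartProd H) Sp ⊆
      ((arcCut H T₀) ×ˢ (Finset.univ : Finset V)).image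
        (fun q => ((q.2, q.1.1), (q.2, q.1.2))) := by
    rintro ⟨a, b⟩ hab
    obtain ⟨h1, h2, h3⟩ := mem_arcCut.1 hab
    rcases cartProd_adj.1 h3 with ⟨hA, hE⟩ | ⟨hE, hA⟩
    · exact absurd (hE ▸ h1 : b.2 ∈ T₀) h2
    · refine Finset.mem_image.2 ⟨((a.2, b.2), a.1),
        Finset.mem_product.2 ⟨mem_arcCut.2 ⟨h1, h2, hA⟩, Finset.mem_univ _⟩, ?_⟩
      exact Prod.ext rfl (Prod.ext hE rfl)
  calc (arcCut (G.cartProd H) Sp).card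
      ≤ (((arcCut H T₀) ×ˢ (Finset.univ : Finset V)).image
          (fun q => ((q.2, q.1.1), (q.2, q.1.2)))).card := Finset.card_le_card hsub
    _ ≤ ((arcCut H T₀) ×ˢ (Finset.univ : Finset V)).card := Finset.card_image_le
    _ = (arcCut H T₀).card * Fintype.card V := by
        rw [Finset.card_product, Finset.card_univ]
    _ ≤ H.arcConn * Fintype.card V := Nat.mul_le_mul_right _ hT₀card

lemma upper_out (G : Digraph V) (H : Digraph W)
    (hV : 2 ≤ Fintype.card V) (hW : 2 ≤ Fintype.card W) :
    (G.cartProd H).arcConn ≤ G.minOutDeg + H.minOutDeg := by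
  have hNV : Nonempty V := Fintype.card_pos_iff.1 (by omega)
  have hNW : Nonempty W := Fintype.card_pos_iff.1 (by omega)
  obtain ⟨v₀, hv₀⟩ := exists_minOutDeg G
  obtain ⟨w₀, hw₀⟩ := exists_minOutDeg H
  set x : V × W := (v₀, w₀) with hx
  have hne : ({x} : Set (V × W)).Nonempty := ⟨x, rfl⟩
  have hprop : ({x} : Set (V × W)) ≠ Set.univ := by
    obtain ⟨u, hu⟩ := Fintype.exists_ne_of_one_lt_card (by omega) v₀
    intro hc
    have : (u, w₀) ∈ ({x} : Set (V × W)) := hc ▸ Set.mem_univ _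
    exact hu (congrArg Prod.fst this)
  refine le_trans (arcConn_le_cut _ {x} hne hprop) ?_
  have hsub : arcCut (G.cartProd H) {x} ⊆
      ((Finset.univ.filter fun y => G.Adj v₀ y).image fun y => (x, (y, w₀))) ∪
      ((Finset.univ.filter fun y => H.Adj w₀ y).image fun y => (x, (v₀, y))) := by
    rintro ⟨a, b⟩ hab
    obtain ⟨h1, h2, h3⟩ := mem_arcCut.1 hab
    have ha : a = x := h1
    subst ha
    rcases cartProd_adj.1 h3 with ⟨hA, hE⟩ | ⟨hE, hA⟩
    · refine Finset.mem_union_left _ (Finset.mem_image.2 ⟨b.1,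
        Finset.mem_filter.2 ⟨Finset.mem_univ _, hA⟩, ?_⟩)
      exact Prod.ext rfl (Prod.ext rfl hE)
    · refine Finset.mem_union_right _ (Finset.mem_image.2 ⟨b.2,
        Finset.mem_filter.2 ⟨Finset.mem_univ _, hA⟩, ?_⟩)
      exact Prod.ext rfl (Prod.ext hE rfl)
  calc (arcCut (G.cartProd H) {x}).card
      ≤ _ := Finset.card_le_card hsub
    _ ≤ ((Finset.univ.filter fun y => G.Adj v₀ y).image fun y => (x, (y, w₀))).card +
        ((Finset.univ.filter fun y => H.Adj w₀ y).image fun y => (x, (v₀, y))).card :=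
        Finset.card_union_le _ _
    _ ≤ (Finset.univ.filter fun y => G.Adj v₀ y).card +
        (Finset.univ.filter fun y => H.Adj w₀ y).card :=
        Nat.add_le_add Finset.card_image_le Finset.card_image_le
    _ = G.outDeg v₀ + H.outDeg w₀ := by rw [outDeg_eq_card, outDeg_eq_card]
    _ = G.minOutDeg + H.minOutDeg := by rw [hv₀, hw₀]

lemma upper_in (G : Digraph V) (H : Digraph W)
    (hV : 2 ≤ Fintype.card V) (hW : 2 ≤ Fintype.card W) :
    (G.cartProd H).arcConn ≤ G.minInDeg + H.minInDeg := by
  have hNV : Nonempty V := Fintype.card_pos_iff.1 (by omega)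
  have hNW : Nonempty W := Fintype.card_pos_iff.1 (by omega)
  obtain ⟨v₀, hv₀⟩ := exists_minInDeg G
  obtain ⟨w₀, hw₀⟩ := exists_minInDeg H
  set x : V × W := (v₀, w₀) with hx
  have hne : ({x}ᶜ : Set (V × W)).Nonempty := by
    obtain ⟨u, hu⟩ := Fintype.exists_ne_of_one_lt_card (by omega) v₀
    exact ⟨(u, w₀), fun hc => hu (congrArg Prod.fst (hc : (u, w₀) = x))⟩
  have hprop : ({x}ᶜ : Set (V × W)) ≠ Set.univ := by
    intro hc
    have : x ∈ ({x}ᶜ : Set (V × W)) := hc ▸ Set.mem_univ _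
    exact this rfl
  refine le_trans (arcConn_le_cut _ {x}ᶜ hne hprop) ?_
  have hsub : arcCut (G.cartProd H) {x}ᶜ ⊆
      ((Finset.univ.filter fun y => G.Adj y v₀).image fun y => (((y, w₀) : V × W), x)) ∪
      ((Finset.univ.filter fun y => H.Adj y w₀).image fun y => (((v₀, y) : V × W), x)) := by
    rintro ⟨a, b⟩ hab
    obtain ⟨h1, h2, h3⟩ := mem_arcCut.1 hab
    have hb : b = x := by
      by_contra hc
      exact h2 hc
    subst hb
    rcases cartProd_adj.1 h3 with ⟨hA, hE⟩ | ⟨hE, hA⟩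
    · refine Finset.mem_union_left _ (Finset.mem_image.2 ⟨a.1,
        Finset.mem_filter.2 ⟨Finset.mem_univ _, hA⟩, ?_⟩)
      exact Prod.ext (Prod.ext rfl hE.symm) rfl
    · refine Finset.mem_union_right _ (Finset.mem_image.2 ⟨a.2,
        Finset.mem_filter.2 ⟨Finset.mem_univ _, hA⟩, ?_⟩)
      exact Prod.ext (Prod.ext hE.symm rfl) rfl
  calc (arcCut (G.cartProd H) {x}ᶜ).card
      ≤ _ := Finset.card_le_card hsub
    _ ≤ ((Finset.univ.filter fun y => G.Adj y v₀).image fun y => (((y, w₀) : V × W), x)).card +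
        ((Finset.univ.filter fun y => H.Adj y w₀).image fun y => (((v₀, y) : V × W), x)).card :=
        Finset.card_union_le _ _
    _ ≤ (Finset.univ.filter fun y => G.Adj y v₀).card +
        (Finset.univ.filter fun y => H.Adj y w₀).card :=
        Nat.add_le_add Finset.card_image_le Finset.card_image_le
    _ = G.inDeg v₀ + H.inDeg w₀ := by rw [inDeg_eq_card, inDeg_eq_card]
    _ = G.minInDeg + H.minInDeg := by rw [hv₀, hw₀]

end Upper

theorem stmt0 {V W : Type*} [Fintype V] [Fintype W]
    (G : Digraph V) (H : Digraph W)
    (hGl : Irreflexive G.Adj) (hHl : Irreflexive H.Adj)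
    (hG : G.IsStrong) (hH : H.IsStrong)
    (hV : 2 ≤ Fintype.card V) (hW : 2 ≤ Fintype.card W) :
    (G.cartProd H).arcConn =
      min (G.arcConn * Fintype.card W)
        (min (H.arcConn * Fintype.card V)
          (min (G.minOutDeg + H.minOutDeg) (G.minInDeg + H.minInDeg))) := by
  refine le_antisymm ?_ ?_
  · exact le_min (upper_row G H hV hW) (le_min (upper_col G H hV hW)
      (le_min (upper_out G H hV hW) (upper_in G H hV hW)))
  · have hcard : 2 ≤ Fintype.card (V × W) := by
      rw [Fintype.card_prod]
      calc 2 ≤ 2 * 2 := by norm_num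
        _ ≤ Fintype.card V * Fintype.card W := Nat.mul_le_mul hV hW
    refine le_csInf (arcConn_set_nonempty (G.cartProd H) hcard) ?_
    rintro k ⟨F, -, hFcard, hFstr⟩
    obtain ⟨S, h1, h2, h3⟩ := exists_cut_of_not_strong (G.cartProd H) F hFstr
    exact le_trans (cut_lower G H hGl hHl hG hH S h1 h2) (le_trans h3 (le_of_eq hFcard))
end

section
/- For any digraph D of order n and any integer k with 2 ≤ k ≤ n, the strong subgraph k-arc-connectivity satisfies λ_k(D) ≤ min{δ⁺(D), δ⁻(D)}. -/
section Aux
open Classical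

lemma lambdaS_le_outDeg {V : Type*} [Fintype V] (D : Digraph V) (S : Set V)
    (v u : V) (hv : v ∈ S) (hu : u ∈ S) (hne : v ≠ u) :
    D.lambdaS S ≤ D.outDeg v := by
  apply csSup_le'
  rintro m ⟨f, hf, hdisj⟩
  have hw : ∀ i : Fin m, ∃ w, (v, w) ∈ f i := by
    intro i
    have h := (hf i).2 v (Or.inl hv) u (Or.inl hu)
    rcases h.cases_head with h | ⟨c, hc, _⟩
    · exact absurd h hne
    · exact ⟨c, hc⟩
  choose w hwmem using hw
  have hinj : Function.Injective w := by
    intro i j hij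
    by_contra hne'
    exact Set.disjoint_left.mp (hdisj i j hne') (hwmem i) (hij ▸ hwmem j)
  have hrange : ∀ i, w i ∈ {x | D.Adj v x} := fun i => (hf i).1 (hwmem i)
  have hle : m ≤ Nat.card {x | D.Adj v x} := by
    have h2 := Nat.card_le_card_of_injective
      (fun i : Fin m => (⟨w i, hrange i⟩ : {x | D.Adj v x}))
      (fun i j h => hinj (congrArg Subtype.val h))
    rwa [Nat.card_fin] at h2
  rw [Digraph.outDeg, ← Nat.card_coe_set_eq]
  simpa [Nat.card_eq_fintype_card] using hle

lemma lambdaS_le_inDeg {V : Type*} [Fintype V] (D : Digraph V) (S : Set V)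
    (v u : V) (hv : v ∈ S) (hu : u ∈ S) (hne : u ≠ v) :
    D.lambdaS S ≤ D.inDeg v := by
  apply csSup_le'
  rintro m ⟨f, hf, hdisj⟩
  have hw : ∀ i : Fin m, ∃ w, (w, v) ∈ f i := by
    intro i
    have h := (hf i).2 u (Or.inl hu) v (Or.inl hv)
    rcases h.cases_tail with h | ⟨c, _, hc⟩
    · exact absurd h.symm hne
    · exact ⟨c, hc⟩
  choose w hwmem using hw
  have hinj : Function.Injective w := by
    intro i j hij
    by_contra hne'
    exact Set.disjoint_left.mp (hdisj i j hne') (hwmem i) (hij ▸ hwmem j)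
  have hrange : ∀ i, w i ∈ {x | D.Adj x v} := fun i => (hf i).1 (hwmem i)
  have hle : m ≤ Nat.card {x | D.Adj x v} := by
    have h2 := Nat.card_le_card_of_injective
      (fun i : Fin m => (⟨w i, hrange i⟩ : {x | D.Adj x v}))
      (fun i j h => hinj (congrArg Subtype.val h))
    rwa [Nat.card_fin] at h2
  rw [Digraph.inDeg, ← Nat.card_coe_set_eq]
  simpa [Nat.card_eq_fintype_card] using hle

end Aux

theorem stmt6 {V : Type*} [Fintype V] (D : Digraph V) (k : ℕ)
    (hk2 : 2 ≤ k) (hkn : k ≤ Fintype.card V) :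
    D.lambdaK k ≤ min D.minOutDeg D.minInDeg := by
  have hVne : Nonempty V := Fintype.card_pos_iff.mp (by omega)
  obtain ⟨m₁, hm₁⟩ := Nat.sInf_mem (Set.range_nonempty D.outDeg)
  obtain ⟨m₂, hm₂⟩ := Nat.sInf_mem (Set.range_nonempty D.inDeg)
  have h1 : D.outDeg m₁ = D.minOutDeg := hm₁
  have h2 : D.inDeg m₂ = D.minInDeg := hm₂
  -- get S ⊇ {m₁, m₂} with ncard = k
  obtain ⟨S, hSsub, -, hScard⟩ := Set.exists_subsuperset_card_eq (n := k)
    (s := ({m₁, m₂} : Set V)) (t := Set.univ)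
    (hsn := le_trans (Set.ncard_insert_le _ _) (by simp; omega))
    (hnt := by rw [Set.ncard_univ, Nat.card_eq_fintype_card]; exact hkn) (hst := Set.subset_univ _)
  have hm₁S : m₁ ∈ S := hSsub (by simp)
  have hm₂S : m₂ ∈ S := hSsub (by simp)
  have hk' : 1 < S.ncard := by omega
  obtain ⟨u₁, hu₁S, hu₁⟩ := Set.exists_ne_of_one_lt_ncard hk' m₁
  obtain ⟨u₂, hu₂S, hu₂⟩ := Set.exists_ne_of_one_lt_ncard hk' m₂
  have hlam : D.lambdaK k ≤ D.lambdaS S := Nat.sInf_le ⟨S, hScard, rfl⟩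
  refine le_min (hlam.trans ?_) (hlam.trans ?_)
  · rw [← h1]
    exact lambdaS_le_outDeg D S m₁ u₁ hm₁S hu₁S (Ne.symm hu₁)
  · rw [← h2]
    exact lambdaS_le_inDeg D S m₂ u₂ hm₂S hu₂S hu₂
end

section
/- For any strong digraph D of order n and integer k with 2 ≤ k ≤ n, λ_k(D) ≤ λ(D), i.e., the strong subgraph k-arc-connectivity is at most the arc-strong connectivity. -/
theorem stmt7 {V : Type*} [Fintype V] (D : Digraph V) (hD : D.IsStrong) (k : ℕ)
    (hk2 : 2 ≤ k) (hkn : k ≤ Fintype.card V) :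
    D.lambdaK k ≤ D.arcConn := by
  classical
  -- the defining set of arcConn is nonempty
  have hne : {m | ∃ F : Set (V × V), F ⊆ D.ArcSet ∧ F.ncard = m ∧
      ¬ (D.DeleteArcs F).IsStrong}.Nonempty := by
    refine ⟨D.ArcSet.ncard, D.ArcSet, subset_rfl, rfl, ?_⟩
    intro h
    obtain ⟨a, b, hab⟩ := Fintype.exists_pair_of_one_lt_card
      (lt_of_lt_of_le one_lt_two (hk2.trans hkn))
    exact hab (by
      have hab2 := h a b
      induction hab2 with
      | refl => rfl
      | tail _ hR ih => exact absurd hR.1 hR.2)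
  obtain ⟨F, hFsub, hFcard, hFns⟩ := Nat.sInf_mem hne
  simp only [Digraph.IsStrong, not_forall] at hFns
  obtain ⟨u, v, huv⟩ := hFns
  have huvne : u ≠ v := by rintro rfl; exact huv Relation.ReflTransGen.refl
  obtain ⟨t, htsub, htcard⟩ := Finset.exists_superset_card_eq
    (s := ({u, v} : Finset V)) (n := k)
    (le_trans (Finset.card_insert_le _ _) (by simpa using hk2)) hkn
  have hkS : D.lambdaK k ≤ D.lambdaS ↑t :=
    Nat.sInf_le ⟨↑t, by rw [Set.ncard_coe_finset, htcard], rfl⟩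
  refine hkS.trans ?_
  rw [show D.arcConn = F.ncard from hFcard.symm]
  apply csSup_le
  · exact ⟨0, Fin.elim0, fun i => i.elim0, fun i => i.elim0⟩
  rintro m ⟨f, hf, hdisj⟩
  have hmeet : ∀ i, ∃ e, e ∈ f i ∧ e ∈ F := by
    intro i
    by_contra h
    push_neg at h
    have hu : u ∈ (↑t : Set V) ∪ {w | ∃ e ∈ f i, w = e.1 ∨ w = e.2} :=
      Or.inl (htsub (by simp))
    have hv : v ∈ (↑t : Set V) ∪ {w | ∃ e ∈ f i, w = e.1 ∨ w = e.2} :=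
      Or.inl (htsub (by simp))
    refine huv (Relation.ReflTransGen.mono ?_ _ _ ((hf i).2 u hu v hv))
    intro a b hab
    exact ⟨(hf i).1 hab, h _ hab⟩
  choose e he1 he2 using hmeet
  have hinj : Function.Injective e := by
    intro i j hij
    by_contra hne'
    exact Set.disjoint_left.mp (hdisj i j hne') (he1 i) (hij ▸ he1 j)
  have hcard : Nat.card (Fin m) ≤ Nat.card F :=
    Nat.card_le_card_of_injective (fun i => (⟨e i, he2 i⟩ : F))
      (fun i j h => hinj (Subtype.ext_iff.mp h))
  rwa [Nat.card_eq_fintype_card, Fintype.card_fin, Nat.card_coe_set_eq] at hcard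
end

section
/- For any undirected graph G, the strong subgraph 2-arc-connectivity of the complete biorientation of G equals the edge-connectivity of G: λ_2(↔G) = λ(G). -/
open Classical in
section
variable {V : Type*}

/-- arcs of a list: consecutive pairs. -/
def arcsOf (l : List V) : Set (V × V) := {p | p ∈ l.zip l.tail}

lemma arcsOf_nil : arcsOf ([] : List V) = ∅ := by simp [arcsOf]
lemma arcsOf_single (a : V) : arcsOf [a] = ∅ := by simp [arcsOf]

lemma mem_arcsOf_cons {a b : V} {t : List V} {p : V × V} :
    p ∈ arcsOf (a :: b :: t) ↔ p = (a, b) ∨ p ∈ arcsOf (b :: t) := by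
  simp [arcsOf]

lemma arcsOf_fst_mem {l : List V} {p : V × V} (h : p ∈ arcsOf l) : p.1 ∈ l :=
  (List.of_mem_zip h).1

lemma arcsOf_snd_mem {l : List V} {p : V × V} (h : p ∈ arcsOf l) : p.2 ∈ l := by
  have := (List.of_mem_zip h).2
  exact List.mem_of_mem_tail this

lemma arcsOf_chain {l : List V} {r : V → V → Prop} (h : l.Chain' r) {p : V × V}
    (hp : p ∈ arcsOf l) : r p.1 p.2 := by
  induction l with
  | nil => simp [arcsOf] at hp
  | cons a t ih =>
    cases t with
    | nil => simp [arcsOf] at hp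
    | cons b t' =>
      rcases mem_arcsOf_cons.1 hp with rfl | hp'
      · exact h.rel_head
      · exact ih h.tail hp'
end

section
variable {V : Type*}

lemma arcsOf_nil' {p : V × V} : p ∈ arcsOf ([] : List V) → False := by simp [arcsOf]
lemma arcsOf_single' {a : V} {p : V × V} : p ∈ arcsOf [a] → False := by simp [arcsOf]

lemma arcsOf_out_unique : ∀ {l : List V}, l.Nodup → ∀ {x y z : V},
    (x, y) ∈ arcsOf l → (x, z) ∈ arcsOf l → y = z := by
  intro l
  induction l with
  | nil => intro _ x y z h; exact absurd h arcsOf_nil'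
  | cons a t ih =>
    cases t with
    | nil => intro _ x y z h; exact absurd h arcsOf_single'
    | cons b t' =>
      intro hnd x y z hy hz
      rcases mem_arcsOf_cons.1 hy with h1 | h1 <;> rcases mem_arcsOf_cons.1 hz with h2 | h2
      · rw [Prod.mk.injEq] at h1 h2; exact h1.2.trans h2.2.symm
      · exfalso; obtain ⟨rfl, rfl⟩ := Prod.mk.injEq .. ▸ h1
        exact (List.nodup_cons.1 hnd).1 (arcsOf_fst_mem h2)
      · exfalso; obtain ⟨rfl, rfl⟩ := Prod.mk.injEq .. ▸ h2
        exact (List.nodup_cons.1 hnd).1 (arcsOf_fst_mem h1)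
      · exact ih (List.nodup_cons.1 hnd).2 h1 h2

lemma arcsOf_in_unique : ∀ {l : List V}, l.Nodup → ∀ {x y z : V},
    (y, x) ∈ arcsOf l → (z, x) ∈ arcsOf l → y = z := by
  intro l
  induction l with
  | nil => intro _ x y z h; exact absurd h arcsOf_nil'
  | cons a t ih =>
    cases t with
    | nil => intro _ x y z h; exact absurd h arcsOf_single'
    | cons b t' =>
      intro hnd x y z hy hz
      rcases mem_arcsOf_cons.1 hy with h1 | h1 <;> rcases mem_arcsOf_cons.1 hz with h2 | h2
      · rw [Prod.mk.injEq] at h1 h2; exact h1.1.trans h2.1.symm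
      · exfalso
        have hx : x = b := (Prod.mk.injEq .. ▸ h1).2
        have hm : x ∈ (b :: t').tail := (List.of_mem_zip h2).2
        exact (List.nodup_cons.1 (List.nodup_cons.1 hnd).2).1 (hx ▸ hm)
      · exfalso
        have hx : x = b := (Prod.mk.injEq .. ▸ h2).2
        have hm : x ∈ (b :: t').tail := (List.of_mem_zip h1).2
        exact (List.nodup_cons.1 (List.nodup_cons.1 hnd).2).1 (hx ▸ hm)
      · exact ih (List.nodup_cons.1 hnd).2 h1 h2

lemma arcsOf_antisymm : ∀ {l : List V}, l.Nodup → ∀ {x y : V},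
    (x, y) ∈ arcsOf l → (y, x) ∈ arcsOf l → False := by
  intro l
  induction l with
  | nil => intro _ x y h1 h2; exact arcsOf_nil' h1
  | cons a t ih =>
    cases t with
    | nil => intro _ x y h1 h2; exact arcsOf_single' h1

    | cons b t' =>
      intro hnd x y hy hz

      rcases mem_arcsOf_cons.1 hy with h1 | h1 <;> rcases mem_arcsOf_cons.1 hz with h2 | h2
      · obtain ⟨rfl, rfl⟩ := Prod.mk.injEq .. ▸ h1
        obtain ⟨h3, -⟩ := Prod.mk.injEq .. ▸ h2
        exact (List.nodup_cons.1 hnd).1 (h3 ▸ List.mem_cons_self)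
      · obtain ⟨rfl, rfl⟩ := Prod.mk.injEq .. ▸ h1
        exact (List.nodup_cons.1 hnd).1 (arcsOf_snd_mem h2)
      · obtain ⟨rfl, rfl⟩ := Prod.mk.injEq .. ▸ h2
        exact (List.nodup_cons.1 hnd).1 (arcsOf_snd_mem h1)
      · exact ih (List.nodup_cons.1 hnd).2 h1 h2

lemma arcsOf_out_exists : ∀ {l : List V} {x : V}, x ∈ l → (hne : l ≠ []) →
    x ≠ l.getLast hne → ∃ y, (x, y) ∈ arcsOf l := by
  intro l
  induction l with
  | nil => intro x h; simp at h
  | cons a t ih =>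
    cases t with
    | nil =>
      intro x hx hne hlast
      simp at hx; exact absurd (by simp [hx]) hlast
    | cons b t' =>
      intro x hx hne hlast
      rcases List.mem_cons.1 hx with rfl | hx'
      · exact ⟨b, mem_arcsOf_cons.2 (Or.inl rfl)⟩
      · have hlast' : x ≠ (b :: t').getLast (by simp) := by
          rwa [List.getLast_cons (by simp)] at hlast
        obtain ⟨y, hy⟩ := ih hx' (by simp) hlast'
        exact ⟨y, mem_arcsOf_cons.2 (Or.inr hy)⟩

lemma arcsOf_in_exists : ∀ {l : List V} {x : V}, x ∈ l → ∀ a t, l = a :: t →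
    x ≠ a → ∃ y, (y, x) ∈ arcsOf l := by
  intro l
  induction l with
  | nil => intro x h; simp at h
  | cons c t ih =>
    cases t with
    | nil =>
      intro x hx a t h hxa
      cases h
      simp at hx; exact absurd hx hxa
    | cons b t' =>
      intro x hx a t h hxa
      cases h
      rcases List.mem_cons.1 hx with rfl | hx'
      · exact absurd rfl hxa
      · by_cases hxb : x = b
        · subst hxb; exact ⟨c, mem_arcsOf_cons.2 (Or.inl rfl)⟩
        · obtain ⟨y, hy⟩ := ih hx' b t' rfl hxb
          exact ⟨y, mem_arcsOf_cons.2 (Or.inr hy)⟩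

lemma arcsOf_out_last : ∀ {l : List V}, l.Nodup → ∀ (hne : l ≠ []) {y : V},
    (l.getLast hne, y) ∈ arcsOf l → False := by
  intro l
  induction l with
  | nil => intro _ hne; exact absurd rfl hne
  | cons a t ih =>
    cases t with
    | nil => intro _ _ y h; exact arcsOf_single' h
    | cons b t' =>
      intro hnd hne y h
      rcases mem_arcsOf_cons.1 h with h1 | h1
      · obtain ⟨h2, -⟩ := Prod.mk.injEq .. ▸ h1
        rw [List.getLast_cons (by simp)] at h2
        exact (List.nodup_cons.1 hnd).1 (h2 ▸ List.getLast_mem _)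
      · rw [List.getLast_cons (by simp)] at h1
        exact ih (List.nodup_cons.1 hnd).2 (by simp) h1

lemma arcsOf_in_head : ∀ {l : List V}, l.Nodup → ∀ a t, l = a :: t → ∀ {y : V},
    (y, a) ∈ arcsOf l → False := by
  intro l
  induction l with
  | nil => intro _ a t h; simp at h
  | cons c t ih =>
    cases t with
    | nil => intro _ a t h y hy; exact arcsOf_single' hy
    | cons b t' =>
      intro hnd a t h y hy
      cases h
      rcases mem_arcsOf_cons.1 hy with h1 | h1
      · have h2 : c = b := (Prod.mk.injEq .. ▸ h1).2
        exact (List.nodup_cons.1 hnd).1 (h2 ▸ List.mem_cons_self)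
      · exact (List.nodup_cons.1 hnd).1 (arcsOf_snd_mem h1)
end

section
variable {V : Type*} {r : V → V → Prop}

/-- Extract a duplicate-free chain list from ReflTransGen. -/
lemma exists_nodup_chain {u v : V} (h : Relation.ReflTransGen r u v) :
    ∃ l : List V, l.Chain' r ∧ l ≠ [] ∧ l.head? = some u ∧ l.getLast? = some v ∧ l.Nodup := by
  induction h using Relation.ReflTransGen.head_induction_on with
  | refl => exact ⟨[v], List.isChain_singleton v, by simp, by simp, by simp, by simp⟩
  | head hab _ ih =>
    rename_i a b _
    obtain ⟨l, hc, hne, hh, hl, hnd⟩ := ih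
    by_cases ha : a ∈ l
    · obtain ⟨s, t, rfl⟩ := List.append_of_mem ha
      refine ⟨a :: t, ?_, by simp, by simp, ?_, ?_⟩
      · exact hc.suffix ⟨s, rfl⟩
      · rwa [List.getLast?_append_of_ne_nil (l₁ := s)] at hl
        simp
      · exact hnd.sublist (List.sublist_append_right s (a :: t))
    · cases l with
      | nil => exact absurd rfl hne
      | cons x l' =>
        have hx : x = b := by simpa using hh
        refine ⟨a :: x :: l', List.isChain_cons_cons.2 ⟨hx ▸ hab, hc⟩, by simp, by simp, ?_, ?_⟩
        · rw [List.getLast?_cons_cons]; exact hl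
        · exact List.nodup_cons.2 ⟨ha, hnd⟩

lemma rtg_mono {p q : V → V → Prop} (h : ∀ a b, p a b → q a b) {u v : V}
    (hr : Relation.ReflTransGen p u v) : Relation.ReflTransGen q u v :=
  Relation.ReflTransGen.mono h _ _ hr

/-- forward reachability along a chain to the last element -/
lemma reach_last : ∀ (l : List V) (hne : l ≠ []), l.Chain' r → ∀ x ∈ l,
    Relation.ReflTransGen (fun a b => (a, b) ∈ arcsOf l) x (l.getLast hne) := by
  intro l
  induction l with
  | nil => intro h; exact absurd rfl h
  | cons a t ih =>
    cases t with
    | nil =>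
      intro _ _ x hx
      simp at hx; subst hx; exact Relation.ReflTransGen.refl
    | cons b t' =>
      intro hne hc x hx
      have step : ∀ y z, (y, z) ∈ arcsOf (b :: t') → (y, z) ∈ arcsOf (a :: b :: t') :=
        fun y z h => mem_arcsOf_cons.2 (Or.inr h)
      rw [List.getLast_cons (by simp : (b :: t') ≠ [])]
      rcases List.mem_cons.1 hx with heq | hx'
      · subst heq
        have h1 : Relation.ReflTransGen (fun c d => (c, d) ∈ arcsOf (x :: b :: t')) x b :=
          Relation.ReflTransGen.single (mem_arcsOf_cons.2 (Or.inl rfl))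
        exact h1.trans (rtg_mono step (ih (by simp) hc.tail b (by simp)))
      · exact rtg_mono step (ih (by simp) hc.tail x hx')

/-- backward reachability from the last element -/
lemma last_reach : ∀ (l : List V) (hne : l ≠ []), l.Chain' r → ∀ x ∈ l,
    Relation.ReflTransGen (fun a b => (b, a) ∈ arcsOf l) (l.getLast hne) x := by
  intro l
  induction l with
  | nil => intro h; exact absurd rfl h
  | cons a t ih =>
    cases t with
    | nil =>
      intro _ _ x hx
      simp at hx; subst hx; exact Relation.ReflTransGen.refl
    | cons b t' =>
      intro hne hc x hx
      have step : ∀ y z, (z, y) ∈ arcsOf (b :: t') → (z, y) ∈ arcsOf (a :: b :: t') :=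
        fun y z h => mem_arcsOf_cons.2 (Or.inr h)
      rw [List.getLast_cons (by simp : (b :: t') ≠ [])]
      rcases List.mem_cons.1 hx with heq | hx'
      · subst heq
        have h1 : Relation.ReflTransGen (fun c d => (d, c) ∈ arcsOf (x :: b :: t'))
            ((b :: t').getLast (by simp)) b :=
          rtg_mono step (ih (by simp) hc.tail b (by simp))
        exact h1.tail (mem_arcsOf_cons.2 (Or.inl rfl))
      · exact rtg_mono step (ih (by simp) hc.tail x hx')

/-- crossing arc exists along a reachability through a cut -/
lemma exists_crossing {s : V → V → Prop} {A : Set V} {u v : V}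
    (h : Relation.ReflTransGen s u v) (hu : u ∈ A) (hv : v ∉ A) :
    ∃ a b, s a b ∧ a ∈ A ∧ b ∉ A := by
  revert hu
  induction h using Relation.ReflTransGen.head_induction_on with
  | refl => exact fun hu => absurd hu hv
  | @head a c hab h ih =>
    intro ha
    by_cases hc : c ∈ A
    · exact ih hc
    · exact ⟨a, c, hab, ha, hc⟩
end

section
variable {V : Type*} [Fintype V]

noncomputable def dOut (F : Set (V × V)) (x : V) : ℕ := {y | (x, y) ∈ F}.ncard
noncomputable def dIn (F : Set (V × V)) (x : V) : ℕ := {y | (y, x) ∈ F}.ncard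

lemma keyCount (F : Set (V × V)) (A : Set V) (u v : V) (k : ℕ)
    (hu : u ∈ A) (hv : v ∉ A)
    (cons : ∀ x, x ≠ u → x ≠ v → dOut F x = dIn F x)
    (val : dOut F u = dIn F u + k) :
    (F ∩ A ×ˢ Aᶜ).ncard = k + (F ∩ Aᶜ ×ˢ A).ncard := by
  classical
  have hFin : (F : Set (V × V)).Finite := Set.toFinite _
  set F' : Finset (V × V) := hFin.toFinset with hF'
  set A' : Finset V := A.toFinite.toFinset with hA'
  have memF' : ∀ p, p ∈ F' ↔ p ∈ F := fun p => Set.Finite.mem_toFinset _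
  have memA' : ∀ x, x ∈ A' ↔ x ∈ A := fun x => Set.Finite.mem_toFinset _
  have houtc : ∀ x : V, (F'.filter (fun p => p.1 = x)).card = dOut F x := by
    intro x
    have himg : F'.filter (fun p => p.1 = x)
        = ({y | (x, y) ∈ F}.toFinite.toFinset).image (fun y => (x, y)) := by
      ext p
      simp only [Finset.mem_filter, memF', Finset.mem_image, Set.Finite.mem_toFinset,
        Set.mem_setOf_eq]
      constructor
      · rintro ⟨h1, rfl⟩
        exact ⟨p.2, by simpa using h1, by simp⟩
      · rintro ⟨y, hy, rfl⟩
        exact ⟨hy, rfl⟩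
    rw [himg, Finset.card_image_of_injective _ (fun a b h => (Prod.mk.injEq .. ▸ h).2),
      dOut, Set.ncard_eq_toFinset_card _ (Set.toFinite _)]
  have hinc : ∀ x : V, (F'.filter (fun p => p.2 = x)).card = dIn F x := by
    intro x
    have himg : F'.filter (fun p => p.2 = x)
        = ({y | (y, x) ∈ F}.toFinite.toFinset).image (fun y => (y, x)) := by
      ext p
      simp only [Finset.mem_filter, memF', Finset.mem_image, Set.Finite.mem_toFinset,
        Set.mem_setOf_eq]
      constructor
      · rintro ⟨h1, rfl⟩
        exact ⟨p.1, by simpa using h1, by simp⟩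
      · rintro ⟨y, hy, rfl⟩
        exact ⟨hy, rfl⟩
    rw [himg, Finset.card_image_of_injective _ (fun a b h => (Prod.mk.injEq .. ▸ h).1),
      dIn, Set.ncard_eq_toFinset_card _ (Set.toFinite _)]
  -- sum of out-degrees over A
  have hS1 : (F'.filter (fun p => p.1 ∈ A)).card = ∑ x ∈ A', dOut F x := by
    rw [Finset.card_eq_sum_card_fiberwise (f := Prod.fst) (t := A')
      (fun p hp => by simp only [Finset.mem_coe, Finset.mem_filter] at hp; exact (memA' _).2 hp.2)]
    refine Finset.sum_congr rfl fun x hx => ?_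
    rw [← houtc x]
    congr 1
    ext p
    simp only [Finset.mem_filter]
    constructor
    · rintro ⟨⟨h1, h2⟩, h3⟩; exact ⟨h1, h3⟩
    · rintro ⟨h1, h3⟩; exact ⟨⟨h1, h3 ▸ (memA' x).1 hx⟩, h3⟩
  have hS2 : (F'.filter (fun p => p.2 ∈ A)).card = ∑ x ∈ A', dIn F x := by
    rw [Finset.card_eq_sum_card_fiberwise (f := Prod.snd) (t := A')
      (fun p hp => by simp only [Finset.mem_coe, Finset.mem_filter] at hp; exact (memA' _).2 hp.2)]
    refine Finset.sum_congr rfl fun x hx => ?_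
    rw [← hinc x]
    congr 1
    ext p
    simp only [Finset.mem_filter]
    constructor
    · rintro ⟨⟨h1, h2⟩, h3⟩; exact ⟨h1, h3⟩
    · rintro ⟨h1, h3⟩; exact ⟨⟨h1, h3 ▸ (memA' x).1 hx⟩, h3⟩
  -- sums relation
  have hsum : ∑ x ∈ A', dOut F x = (∑ x ∈ A', dIn F x) + k := by
    have huA : u ∈ A' := (memA' u).2 hu
    rw [← Finset.add_sum_erase _ _ huA, ← Finset.add_sum_erase _ (dIn F) huA, val]
    have : ∑ x ∈ A'.erase u, dOut F x = ∑ x ∈ A'.erase u, dIn F x := by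
      refine Finset.sum_congr rfl fun x hx => ?_
      have hxu : x ≠ u := (Finset.mem_erase.1 hx).1
      have hxv : x ≠ v := fun h => hv (h ▸ (memA' x).1 (Finset.mem_erase.1 hx).2)
      exact cons x hxu hxv
    omega
  -- splits
  have split1 : (F'.filter (fun p => p.1 ∈ A)).card
      = (F'.filter (fun p => p.1 ∈ A ∧ p.2 ∈ A)).card
        + (F'.filter (fun p => p.1 ∈ A ∧ p.2 ∉ A)).card := by
    have h := Finset.card_filter_add_card_filter_not
      (s := F'.filter (fun p => p.1 ∈ A)) (p := fun p => p.2 ∈ A)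
    rw [Finset.filter_filter, Finset.filter_filter] at h
    exact h.symm
  have split2 : (F'.filter (fun p => p.2 ∈ A)).card
      = (F'.filter (fun p => p.1 ∈ A ∧ p.2 ∈ A)).card
        + (F'.filter (fun p => p.1 ∉ A ∧ p.2 ∈ A)).card := by
    have e1 : F'.filter (fun p => p.1 ∈ A ∧ p.2 ∈ A)
        = (F'.filter (fun p => p.2 ∈ A)).filter (fun p => p.1 ∈ A) := by
      rw [Finset.filter_filter]; apply Finset.filter_congr; intro p _; tauto
    have e2 : F'.filter (fun p => p.1 ∉ A ∧ p.2 ∈ A)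
        = (F'.filter (fun p => p.2 ∈ A)).filter (fun p => ¬ p.1 ∈ A) := by
      rw [Finset.filter_filter]; apply Finset.filter_congr; intro p _; tauto
    have h := Finset.card_filter_add_card_filter_not
      (s := F'.filter (fun p => p.2 ∈ A)) (p := fun p => p.1 ∈ A)
    rw [← e1] at h
    rw [e2]
    exact h.symm
  -- identify with ncards
  have idO : (F ∩ A ×ˢ Aᶜ).ncard = (F'.filter (fun p => p.1 ∈ A ∧ p.2 ∉ A)).card := by
    rw [Set.ncard_eq_toFinset_card _ (Set.toFinite _)]
    congr 1
    ext p
    simp only [Set.Finite.mem_toFinset, Finset.mem_filter, memF', Set.mem_inter_iff, Set.mem_prod, Set.mem_compl_iff]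
  have idI : (F ∩ Aᶜ ×ˢ A).ncard = (F'.filter (fun p => p.1 ∉ A ∧ p.2 ∈ A)).card := by
    rw [Set.ncard_eq_toFinset_card _ (Set.toFinite _)]
    congr 1
    ext p
    simp only [Set.Finite.mem_toFinset, Finset.mem_filter, memF', Set.mem_inter_iff, Set.mem_prod, Set.mem_compl_iff]
  rw [idO, idI]
  omega
end

section
variable {V : Type*} [Fintype V]

def IsFlow (G : SimpleGraph V) (u v : V) (k : ℕ) (F : Set (V × V)) : Prop :=
  (∀ p ∈ F, G.Adj p.1 p.2) ∧ (∀ p ∈ F, (p.2, p.1) ∉ F) ∧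
  (∀ x, x ≠ u → x ≠ v → dOut F x = dIn F x) ∧ dOut F u = dIn F u + k

lemma augment (G : SimpleGraph V) (u v : V) (k : ℕ) (F : Set (V × V))
    (hF : IsFlow G u v k F)
    (l : List V) (hc : l.Chain' (fun a b => G.Adj a b ∧ (a, b) ∉ F)) (hne : l ≠ [])
    (hh : l.head? = some u) (hl : l.getLast? = some v) (hnd : l.Nodup) (huv : u ≠ v) :
    IsFlow G u v (k + 1) ((F \ {p | p.swap ∈ arcsOf l}) ∪ {p | p ∈ arcsOf l ∧ p.swap ∉ F}) := by
  classical
  obtain ⟨hadj, hanti, hcons, hval⟩ := hF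
  set AA := arcsOf l with hAA
  set F' := (F \ {p | p.swap ∈ AA}) ∪ {p | p ∈ AA ∧ p.swap ∉ F} with hF'
  have hres : ∀ p ∈ AA, G.Adj p.1 p.2 ∧ p ∉ F := fun p hp => arcsOf_chain hc hp
  -- head and last
  obtain ⟨a, t, rfl⟩ : ∃ a t, l = a :: t := by
    cases l with
    | nil => exact absurd rfl hne
    | cons a t => exact ⟨a, t, rfl⟩
  have hhead : a = u := by simpa using hh
  have hlast : (a :: t).getLast (by simp) = v := by
    have := List.getLast?_eq_getLast (l := a :: t) (by simp)
    rw [this] at hl; simpa using hl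
  -- membership in F'
  have memF' : ∀ p : V × V, p ∈ F' ↔ (p ∈ F ∧ p.swap ∉ AA) ∨ (p ∈ AA ∧ p.swap ∉ F) := by
    intro p; rw [hF']; simp only [Set.mem_union, Set.mem_diff, Set.mem_setOf_eq]
  -- out/in sets of F'
  have outEq : ∀ x, {y | (x, y) ∈ F'} =
      ({y | (x, y) ∈ F} \ {y | (y, x) ∈ AA}) ∪ ({y | (x, y) ∈ AA} ∩ {y | (y, x) ∉ F}) := by
    intro x; ext y
    have := memF' (x, y)
    simp only [Set.mem_setOf_eq, Set.mem_union, Set.mem_diff, Set.mem_inter_iff] at *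
    simpa [Prod.swap] using this
  have inEq : ∀ x, {y | (y, x) ∈ F'} =
      ({y | (y, x) ∈ F} \ {y | (x, y) ∈ AA}) ∪ ({y | (y, x) ∈ AA} ∩ {y | (x, y) ∉ F}) := by
    intro x; ext y
    have := memF' (y, x)
    simp only [Set.mem_setOf_eq, Set.mem_union, Set.mem_diff, Set.mem_inter_iff] at *
    simpa [Prod.swap] using this
  refine ⟨?_, ?_, ?_, ?_⟩
  · -- adjacency
    intro p hp
    rcases (memF' p).1 hp with ⟨h1, _⟩ | ⟨h1, _⟩
    · exact hadj p h1
    · exact (hres p h1).1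
  · -- antisymmetry
    intro p hp hswap
    rcases (memF' p).1 hp with ⟨h1, h2⟩ | ⟨h1, h2⟩ <;>
      rcases (memF' (p.2, p.1)).1 hswap with ⟨g1, g2⟩ | ⟨g1, g2⟩
    · exact hanti p h1 g1
    · exact h2 (by simpa [Prod.swap] using g1)
    · exact g2 (by simpa [Prod.swap] using h1)
    · exact arcsOf_antisymm hnd (show (p.1, p.2) ∈ AA from by simpa using h1)
        (by simpa using g1)
  · -- conservation
    intro x hxu hxv
    by_cases hxl : x ∈ a :: t
    · -- internal vertex
      obtain ⟨p, hp⟩ := arcsOf_in_exists hxl a t rfl (fun h => hxu (h.trans hhead))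
      obtain ⟨n, hn⟩ := arcsOf_out_exists hxl (by simp) (fun h => hxv (h.trans hlast))
      have hRin : {y | (y, x) ∈ AA} = {p} :=
        Set.eq_singleton_iff_unique_mem.2 ⟨hp, fun y hy => arcsOf_in_unique hnd hy hp⟩
      have hRout : {y | (x, y) ∈ AA} = {n} :=
        Set.eq_singleton_iff_unique_mem.2 ⟨hn, fun y hy => arcsOf_out_unique hnd hy hn⟩
      have hxnF : (x, n) ∉ F := (hres _ hn).2
      have hpxF : (p, x) ∉ F := (hres _ hp).2
      have hnOut : n ∉ {y | (x, y) ∈ F} := hxnF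
      have hpIn : p ∉ {y | (y, x) ∈ F} := hpxF
      have houral : {y | (x, y) ∈ F'} =
          ({y | (x, y) ∈ F} \ {p}) ∪ ({n} ∩ {y | (y, x) ∉ F}) := by
        rw [outEq x, hRin, hRout]
      have hinral : {y | (y, x) ∈ F'} =
          ({y | (y, x) ∈ F} \ {n}) ∪ ({p} ∩ {y | (x, y) ∉ F}) := by
        rw [inEq x, hRin, hRout]
      have hdisj1 : Disjoint ({y | (x, y) ∈ F} \ {p}) ({n} ∩ {y | (y, x) ∉ F}) := by
        rw [Set.disjoint_left]
        rintro y ⟨hy, -⟩ ⟨rfl, -⟩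
        exact hnOut hy
      have hdisj2 : Disjoint ({y | (y, x) ∈ F} \ {n}) ({p} ∩ {y | (x, y) ∉ F}) := by
        rw [Set.disjoint_left]
        rintro y ⟨hy, -⟩ ⟨rfl, -⟩
        exact hpIn hy
      have e1 : dOut F' x = ({y | (x, y) ∈ F} \ {p}).ncard + ({n} ∩ {y | (y, x) ∉ F}).ncard := by
        rw [dOut, houral, Set.ncard_union_eq hdisj1 (Set.toFinite _) (Set.toFinite _)]
      have e2 : dIn F' x = ({y | (y, x) ∈ F} \ {n}).ncard + ({p} ∩ {y | (x, y) ∉ F}).ncard := by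
        rw [dIn, hinral, Set.ncard_union_eq hdisj2 (Set.toFinite _) (Set.toFinite _)]
      have hc0 := hcons x hxu hxv
      rw [dOut] at hc0
      rw [e1, e2]
      by_cases hxp : (x, p) ∈ F <;> by_cases hnx : (n, x) ∈ F
      · -- both: out loses p, in loses n
        have o1 : ({y | (x, y) ∈ F} \ {p}).ncard = dOut F x - 1 :=
          Set.ncard_diff_singleton_of_mem hxp
        have o2 : ({n} ∩ {y | (y, x) ∉ F}).ncard = 0 := by
          rw [Set.ncard_eq_zero (Set.toFinite _)]
          ext y; simp only [Set.mem_inter_iff, Set.mem_singleton_iff, Set.mem_setOf_eq,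
            Set.mem_empty_iff_false, iff_false, not_and]
          rintro rfl; simp [hnx]
        have i1 : ({y | (y, x) ∈ F} \ {n}).ncard = dIn F x - 1 :=
          Set.ncard_diff_singleton_of_mem hnx
        have i2 : ({p} ∩ {y | (x, y) ∉ F}).ncard = 0 := by
          rw [Set.ncard_eq_zero (Set.toFinite _)]
          ext y; simp only [Set.mem_inter_iff, Set.mem_singleton_iff, Set.mem_setOf_eq,
            Set.mem_empty_iff_false, iff_false, not_and]
          rintro rfl; simp [hxp]
        have hpos : 0 < dOut F x := by
          rw [dOut, Set.ncard_pos (Set.toFinite _)]; exact ⟨p, hxp⟩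
        have hpos2 : 0 < dIn F x := by
          rw [dIn, Set.ncard_pos (Set.toFinite _)]; exact ⟨n, hnx⟩
        rw [o1, o2, i1, i2]
        have := hcons x hxu hxv
        omega
      · have o1 : ({y | (x, y) ∈ F} \ {p}).ncard = dOut F x - 1 :=
          Set.ncard_diff_singleton_of_mem hxp
        have o2 : ({n} ∩ {y | (y, x) ∉ F}).ncard = 1 := by
          have : ({n} : Set V) ∩ {y | (y, x) ∉ F} = {n} := by
            ext y; simp only [Set.mem_inter_iff, Set.mem_singleton_iff, Set.mem_setOf_eq,
              and_iff_left_iff_imp]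
            rintro rfl; exact hnx
          rw [this, Set.ncard_singleton]
        have i1 : ({y | (y, x) ∈ F} \ {n}).ncard = dIn F x := by
          rw [Set.diff_singleton_eq_self (s := {y | (y, x) ∈ F}) hnx]; rfl
        have i2 : ({p} ∩ {y | (x, y) ∉ F}).ncard = 0 := by
          rw [Set.ncard_eq_zero (Set.toFinite _)]
          ext y; simp only [Set.mem_inter_iff, Set.mem_singleton_iff, Set.mem_setOf_eq,
            Set.mem_empty_iff_false, iff_false, not_and]
          rintro rfl; simp [hxp]
        have hpos : 0 < dOut F x := by
          rw [dOut, Set.ncard_pos (Set.toFinite _)]; exact ⟨p, hxp⟩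
        rw [o1, o2, i1, i2]
        have := hcons x hxu hxv
        omega
      · have o1 : ({y | (x, y) ∈ F} \ {p}).ncard = dOut F x := by
          rw [Set.diff_singleton_eq_self (s := {y | (x, y) ∈ F}) hxp]; rfl
        have o2 : ({n} ∩ {y | (y, x) ∉ F}).ncard = 0 := by
          rw [Set.ncard_eq_zero (Set.toFinite _)]
          ext y; simp only [Set.mem_inter_iff, Set.mem_singleton_iff, Set.mem_setOf_eq,
            Set.mem_empty_iff_false, iff_false, not_and]
          rintro rfl; simp [hnx]
        have i1 : ({y | (y, x) ∈ F} \ {n}).ncard = dIn F x - 1 :=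
          Set.ncard_diff_singleton_of_mem hnx
        have i2 : ({p} ∩ {y | (x, y) ∉ F}).ncard = 1 := by
          have : ({p} : Set V) ∩ {y | (x, y) ∉ F} = {p} := by
            ext y; simp only [Set.mem_inter_iff, Set.mem_singleton_iff, Set.mem_setOf_eq,
              and_iff_left_iff_imp]
            rintro rfl; exact hxp
          rw [this, Set.ncard_singleton]
        have hpos2 : 0 < dIn F x := by
          rw [dIn, Set.ncard_pos (Set.toFinite _)]; exact ⟨n, hnx⟩
        rw [o1, o2, i1, i2]
        have := hcons x hxu hxv
        omega
      · have o1 : ({y | (x, y) ∈ F} \ {p}).ncard = dOut F x := by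
          rw [Set.diff_singleton_eq_self (s := {y | (x, y) ∈ F}) hxp]; rfl
        have o2 : ({n} ∩ {y | (y, x) ∉ F}).ncard = 1 := by
          have : ({n} : Set V) ∩ {y | (y, x) ∉ F} = {n} := by
            ext y; simp only [Set.mem_inter_iff, Set.mem_singleton_iff, Set.mem_setOf_eq,
              and_iff_left_iff_imp]
            rintro rfl; exact hnx
          rw [this, Set.ncard_singleton]
        have i1 : ({y | (y, x) ∈ F} \ {n}).ncard = dIn F x := by
          rw [Set.diff_singleton_eq_self (s := {y | (y, x) ∈ F}) hnx]; rfl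
        have i2 : ({p} ∩ {y | (x, y) ∉ F}).ncard = 1 := by
          have : ({p} : Set V) ∩ {y | (x, y) ∉ F} = {p} := by
            ext y; simp only [Set.mem_inter_iff, Set.mem_singleton_iff, Set.mem_setOf_eq,
              and_iff_left_iff_imp]
            rintro rfl; exact hxp
          rw [this, Set.ncard_singleton]
        rw [o1, o2, i1, i2]
        have := hcons x hxu hxv
        omega
    · -- x not on the path: degrees unchanged
      have hRin : {y | (y, x) ∈ AA} = ∅ := by
        ext y; simp only [Set.mem_setOf_eq, Set.mem_empty_iff_false, iff_false]
        exact fun hy => hxl (arcsOf_snd_mem hy)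
      have hRout : {y | (x, y) ∈ AA} = ∅ := by
        ext y; simp only [Set.mem_setOf_eq, Set.mem_empty_iff_false, iff_false]
        exact fun hy => hxl (arcsOf_fst_mem hy)
      have e1 : dOut F' x = dOut F x := by
        rw [dOut, outEq x, hRin, hRout]; simp [dOut]
      have e2 : dIn F' x = dIn F x := by
        rw [dIn, inEq x, hRin, hRout]; simp [dIn]
      rw [e1, e2]; exact hcons x hxu hxv
  · -- value at u
    subst hhead
    have hane : a ≠ (a :: t).getLast (by simp) := fun h => huv (h.trans hlast)
    obtain ⟨n, hn⟩ := arcsOf_out_exists ((List.mem_cons_self (a := a) (l := t))) (by simp) hane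
    have hRin : {y | (y, a) ∈ AA} = ∅ := by
      ext y; simp only [Set.mem_setOf_eq, Set.mem_empty_iff_false, iff_false]
      exact fun hy => arcsOf_in_head hnd a t rfl hy
    have hRout : {y | (a, y) ∈ AA} = {n} :=
      Set.eq_singleton_iff_unique_mem.2 ⟨hn, fun y hy => arcsOf_out_unique hnd hy hn⟩
    have hanF : (a, n) ∉ F := (hres _ hn).2
    have houral : {y | (a, y) ∈ F'} = {y | (a, y) ∈ F} ∪ ({n} ∩ {y | (y, a) ∉ F}) := by
      rw [outEq a, hRin, hRout, Set.diff_empty]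
    have hinral : {y | (y, a) ∈ F'} = {y | (y, a) ∈ F} \ {n} := by
      rw [inEq a, hRin, hRout, Set.empty_inter, Set.union_empty]
    by_cases hna : (n, a) ∈ F
    · have o1 : {y | (a, y) ∈ F'} = {y | (a, y) ∈ F} := by
        rw [houral]
        have : ({n} : Set V) ∩ {y | (y, a) ∉ F} = ∅ := by
          ext y; simp only [Set.mem_inter_iff, Set.mem_singleton_iff, Set.mem_setOf_eq,
            Set.mem_empty_iff_false, iff_false, not_and]
          rintro rfl; simp [hna]
        rw [this, Set.union_empty]
      have i1 : dIn F' a = dIn F a - 1 := by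
        rw [dIn, hinral]
        exact Set.ncard_diff_singleton_of_mem hna
      have hpos : 0 < dIn F a := by
        rw [dIn, Set.ncard_pos (Set.toFinite _)]; exact ⟨n, hna⟩
      have e1 : dOut F' a = dOut F a := by rw [dOut, o1]; rfl
      rw [e1, i1]
      omega
    · have o1 : dOut F' a = dOut F a + 1 := by
        rw [dOut, houral]
        have : ({n} : Set V) ∩ {y | (y, a) ∉ F} = {n} := by
          ext y; simp only [Set.mem_inter_iff, Set.mem_singleton_iff, Set.mem_setOf_eq,
            and_iff_left_iff_imp]
          rintro rfl; exact hna
        rw [this, Set.union_singleton, Set.ncard_insert_of_notMem (s := {y | (a, y) ∈ F}) hanF (Set.toFinite _)]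
        rfl
      have i1 : dIn F' a = dIn F a := by
        rw [dIn, hinral, Set.diff_singleton_eq_self (s := {y | (y, a) ∈ F}) hna]; rfl
      rw [o1, i1]
      omega

lemma removePath (G : SimpleGraph V) (u v : V) (k : ℕ) (F : Set (V × V))
    (hF : IsFlow G u v (k + 1) F)
    (l : List V) (hsub : arcsOf l ⊆ F) (hne : l ≠ [])
    (hh : l.head? = some u) (hl : l.getLast? = some v) (hnd : l.Nodup) (huv : u ≠ v) :
    IsFlow G u v k (F \ arcsOf l) := by
  classical
  obtain ⟨hadj, hanti, hcons, hval⟩ := hF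
  set AA := arcsOf l with hAA
  obtain ⟨a, t, rfl⟩ : ∃ a t, l = a :: t := by
    cases l with
    | nil => exact absurd rfl hne
    | cons a t => exact ⟨a, t, rfl⟩
  have hhead : a = u := by simpa using hh
  have hlast : (a :: t).getLast (by simp) = v := by
    have := List.getLast?_eq_getLast (l := a :: t) (by simp)
    rw [this] at hl; simpa using hl
  have outEq : ∀ x, {y | (x, y) ∈ F \ AA} = {y | (x, y) ∈ F} \ {y | (x, y) ∈ AA} := by
    intro x; ext y; simp [Set.mem_diff]
  have inEq : ∀ x, {y | (y, x) ∈ F \ AA} = {y | (y, x) ∈ F} \ {y | (y, x) ∈ AA} := by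
    intro x; ext y; simp [Set.mem_diff]
  refine ⟨fun p hp => hadj p hp.1, fun p hp h2 => hanti p hp.1 h2.1, ?_, ?_⟩
  · intro x hxu hxv
    by_cases hxl : x ∈ a :: t
    · obtain ⟨p, hp⟩ := arcsOf_in_exists hxl a t rfl (fun h => hxu (h.trans hhead))
      obtain ⟨n, hn⟩ := arcsOf_out_exists hxl (by simp) (fun h => hxv (h.trans hlast))
      have hRin : {y | (y, x) ∈ AA} = {p} :=
        Set.eq_singleton_iff_unique_mem.2 ⟨hp, fun y hy => arcsOf_in_unique hnd hy hp⟩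
      have hRout : {y | (x, y) ∈ AA} = {n} :=
        Set.eq_singleton_iff_unique_mem.2 ⟨hn, fun y hy => arcsOf_out_unique hnd hy hn⟩
      have hxn : (x, n) ∈ F := hsub hn
      have hpx : (p, x) ∈ F := hsub hp
      have e1 : dOut (F \ AA) x = dOut F x - 1 := by
        rw [dOut, outEq x, hRout]
        exact Set.ncard_diff_singleton_of_mem hxn
      have e2 : dIn (F \ AA) x = dIn F x - 1 := by
        rw [dIn, inEq x, hRin]
        exact Set.ncard_diff_singleton_of_mem hpx
      have hpos : 0 < dOut F x := by
        rw [dOut, Set.ncard_pos (Set.toFinite _)]; exact ⟨n, hxn⟩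
      have hpos2 : 0 < dIn F x := by
        rw [dIn, Set.ncard_pos (Set.toFinite _)]; exact ⟨p, hpx⟩
      have := hcons x hxu hxv
      omega
    · have hRin : {y | (y, x) ∈ AA} = ∅ := by
        ext y; simp only [Set.mem_setOf_eq, Set.mem_empty_iff_false, iff_false]
        exact fun hy => hxl (arcsOf_snd_mem hy)
      have hRout : {y | (x, y) ∈ AA} = ∅ := by
        ext y; simp only [Set.mem_setOf_eq, Set.mem_empty_iff_false, iff_false]
        exact fun hy => hxl (arcsOf_fst_mem hy)
      have e1 : dOut (F \ AA) x = dOut F x := by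
        rw [dOut, outEq x, hRout, Set.diff_empty]; rfl
      have e2 : dIn (F \ AA) x = dIn F x := by
        rw [dIn, inEq x, hRin, Set.diff_empty]; rfl
      rw [e1, e2]; exact hcons x hxu hxv
  · subst hhead
    have hane : a ≠ (a :: t).getLast (by simp) := fun h => huv (h.trans hlast)
    obtain ⟨n, hn⟩ := arcsOf_out_exists ((List.mem_cons_self (a := a) (l := t))) (by simp) hane
    have hRin : {y | (y, a) ∈ AA} = ∅ := by
      ext y; simp only [Set.mem_setOf_eq, Set.mem_empty_iff_false, iff_false]
      exact fun hy => arcsOf_in_head hnd a t rfl hy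
    have hRout : {y | (a, y) ∈ AA} = {n} :=
      Set.eq_singleton_iff_unique_mem.2 ⟨hn, fun y hy => arcsOf_out_unique hnd hy hn⟩
    have han : (a, n) ∈ F := hsub hn
    have e1 : dOut (F \ AA) a = dOut F a - 1 := by
      rw [dOut, outEq a, hRout]
      exact Set.ncard_diff_singleton_of_mem han
    have e2 : dIn (F \ AA) a = dIn F a := by
      rw [dIn, inEq a, hRin, Set.diff_empty]; rfl
    have hpos : 0 < dOut F a := by
      rw [dOut, Set.ncard_pos (Set.toFinite _)]; exact ⟨n, han⟩
    omega

lemma rtg_closed {r : V → V → Prop} {A : Set V} {u v : V}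
    (h : Relation.ReflTransGen r u v) (hu : u ∈ A)
    (hcl : ∀ a b, r a b → a ∈ A → b ∈ A) : v ∈ A := by
  induction h with
  | refl => exact hu
  | tail _ hbc ih => exact hcl _ _ hbc ih

lemma flow_exists (G : SimpleGraph V) (u v : V) (huv : u ≠ v) (c : ℕ)
    (H : ∀ F : Set (Sym2 V), F ⊆ G.edgeSet → F.ncard < c →
      (G.deleteEdges F).Connected) :
    ∃ F, IsFlow G u v c F := by
  classical
  suffices h : ∀ j, j ≤ c → ∃ F, IsFlow G u v j F from h c le_rfl
  intro j hj
  induction j with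
  | zero =>
    refine ⟨∅, fun p hp => hp.elim, fun p hp => hp.elim, ?_, ?_⟩
    · intro x _ _; rfl
    · simp [dOut, dIn]
  | succ k ih =>
    obtain ⟨F, hF⟩ := ih (Nat.le_of_succ_le hj)
    obtain ⟨hadj, hanti, hcons, hval⟩ := hF
    set s : V → V → Prop := fun a b => G.Adj a b ∧ (a, b) ∉ F with hs
    by_cases hreach : Relation.ReflTransGen s u v
    · obtain ⟨l, hc, hne, hh, hl, hnd⟩ := exists_nodup_chain hreach
      exact ⟨_, augment G u v k F ⟨hadj, hanti, hcons, hval⟩ l hc hne hh hl hnd huv⟩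
    · exfalso
      set A : Set V := {y | Relation.ReflTransGen s u y} with hA
      have huA : u ∈ A := Relation.ReflTransGen.refl
      have hvA : v ∉ A := hreach
      have hclosed : ∀ x y, x ∈ A → G.Adj x y → (x, y) ∉ F → y ∈ A :=
        fun x y hx h1 h2 => Relation.ReflTransGen.tail hx ⟨h1, h2⟩
      have hIempty : F ∩ Aᶜ ×ˢ A = ∅ := by
        ext p
        simp only [Set.mem_inter_iff, Set.mem_prod, Set.mem_compl_iff,
          Set.mem_empty_iff_false, iff_false, not_and]
        intro hpF h1 h2
        exact h1 (hclosed p.2 p.1 h2 (hadj p hpF).symm (hanti p hpF))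
      have hcount := keyCount F A u v k huA hvA hcons hval
      rw [hIempty] at hcount
      simp only [Set.ncard_empty, Nat.add_zero] at hcount
      -- the crossing edge set
      set EA : Set (Sym2 V) := (fun p : V × V => s(p.1, p.2)) '' (F ∩ A ×ˢ Aᶜ) with hEA
      have hEAsub : EA ⊆ G.edgeSet := by
        rintro e ⟨p, hp, rfl⟩
        exact hadj p hp.1
      have hEAcard : EA.ncard < c := by
        have h1 : EA.ncard ≤ (F ∩ A ×ˢ Aᶜ).ncard := Set.ncard_image_le (Set.toFinite _)
        omega
      have hconn := H EA hEAsub hEAcard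
      have hreach2 : (G.deleteEdges EA).Reachable u v := hconn.preconnected u v
      have hrtg := (SimpleGraph.reachable_iff_reflTransGen u v).1 hreach2
      have hvA2 : v ∈ A := by
        refine rtg_closed hrtg huA fun a b hab ha => ?_
        rw [SimpleGraph.deleteEdges_adj] at hab
        by_contra hb
        apply hab.2
        rw [hEA]
        refine ⟨(a, b), ⟨?_, ha, hb⟩, rfl⟩
        by_contra habF
        exact hb (hclosed a b ha hab.1 habF)
      exact hvA hvA2

lemma flow_decomp (G : SimpleGraph V) (u v : V) (huv : u ≠ v) :
    ∀ (k : ℕ) (F : Set (V × V)), IsFlow G u v k F →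
    ∃ f : Fin k → Set (V × V), (∀ i, f i ⊆ F) ∧
      (∀ i, ∃ l : List V, l ≠ [] ∧ l.Nodup ∧ l.Chain' G.Adj ∧
        l.head? = some u ∧ l.getLast? = some v ∧ f i = arcsOf l) ∧
      (∀ i j, i ≠ j → Disjoint (f i) (f j)) := by
  intro k
  induction k with
  | zero => exact fun F _ => ⟨fun i => i.elim0, fun i => i.elim0, fun i => i.elim0,
      fun i => i.elim0⟩
  | succ k ih =>
    intro F hF
    obtain ⟨hadj, hanti, hcons, hval⟩ := hF
    set s : V → V → Prop := fun a b => (a, b) ∈ F with hs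
    have hreach : Relation.ReflTransGen s u v := by
      by_contra hreach
      set A : Set V := {y | Relation.ReflTransGen s u y} with hA
      have huA : u ∈ A := Relation.ReflTransGen.refl
      have hOempty : F ∩ A ×ˢ Aᶜ = ∅ := by
        ext p
        simp only [Set.mem_inter_iff, Set.mem_prod, Set.mem_compl_iff,
          Set.mem_empty_iff_false, iff_false, not_and]
        intro hpF h1 h2
        exact h2 (Relation.ReflTransGen.tail h1 (show s p.1 p.2 from hpF))
      have hcount := keyCount F A u v (k + 1) huA hreach hcons hval
      rw [hOempty] at hcount
      simp only [Set.ncard_empty] at hcount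
      omega
    obtain ⟨l, hc, hne, hh, hl, hnd⟩ := exists_nodup_chain hreach
    have hsub : arcsOf l ⊆ F := fun p hp => arcsOf_chain hc hp
    have hflow' := removePath G u v k F ⟨hadj, hanti, hcons, hval⟩ l hsub hne hh hl hnd huv
    obtain ⟨f', hsub', hpath', hdisj'⟩ := ih (F \ arcsOf l) hflow'
    refine ⟨Fin.cases (arcsOf l) f', ?_, ?_, ?_⟩
    · intro i
      refine Fin.cases ?_ ?_ i
      · simpa using hsub
      · intro i'
        simpa using (show f' i' ⊆ F from fun p hp => ((hsub' i') hp).1)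
    · intro i
      refine Fin.cases ?_ ?_ i
      · exact ⟨l, hne, hnd, hc.imp (fun a b h => hadj (a, b) h), hh, hl, by simp⟩
      · intro i'
        obtain ⟨l', h1, h2, h3, h4, h5, h6⟩ := hpath' i'
        exact ⟨l', h1, h2, h3, h4, h5, by simpa using h6⟩
    · intro i j hij
      rcases Fin.eq_zero_or_eq_succ i with rfl | ⟨i', rfl⟩ <;>
        rcases Fin.eq_zero_or_eq_succ j with rfl | ⟨j', rfl⟩
      · exact absurd rfl hij
      · simp only [Fin.cases_zero, Fin.cases_succ]
        exact Set.disjoint_left.2 fun p hp hp2 => ((hsub' j') hp2).2 hp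
      · simp only [Fin.cases_zero, Fin.cases_succ]
        exact Set.disjoint_right.2 fun p hp hp2 => ((hsub' i') hp2).2 hp
      · simp only [Fin.cases_succ]
        exact hdisj' i' j' (fun h => hij (by rw [h]))

def biarcsOf {W : Type*} (l : List W) : Set (W × W) := {p | p ∈ arcsOf l ∨ p.swap ∈ arcsOf l}

lemma strong_of_path (G : SimpleGraph V) (u v : V) (l : List V) (hne : l ≠ [])
    (hc : l.Chain' G.Adj) (hh : l.head? = some u) (hl : l.getLast? = some v) :
    G.biorient.IsStrongSubgraphOn {u, v} (biarcsOf l) := by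
  classical
  have hul : u ∈ l := by
    cases l with
    | nil => exact absurd rfl hne
    | cons a t => simp at hh; simp [hh]
  have hlast : l.getLast hne = v := by
    have := List.getLast?_eq_getLast hne
    rw [this] at hl; simpa using hl
  have hvl : v ∈ l := hlast ▸ List.getLast_mem hne
  constructor
  · rintro p (hp | hp)
    · exact arcsOf_chain hc hp
    · exact (arcsOf_chain hc hp : G.Adj p.2 p.1).symm
  · intro x hx w hw
    have hmem : ∀ z, z ∈ ({u, v} : Set V) ∪ {y | ∃ e ∈ biarcsOf l, y = e.1 ∨ y = e.2} →
        z ∈ l := by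
      rintro z (hz | hz)
      · rcases hz with rfl | rfl
        · exact hul
        · exact hvl
      · obtain ⟨e, he, hz⟩ := hz
        rcases he with he | he <;> rcases hz with rfl | rfl
        · exact arcsOf_fst_mem he
        · exact arcsOf_snd_mem he
        · exact arcsOf_snd_mem he
        · exact arcsOf_fst_mem he
    have hxl := hmem x hx
    have hwl := hmem w hw
    have h1 : Relation.ReflTransGen (fun a b => (a, b) ∈ biarcsOf l) x (l.getLast hne) :=
      rtg_mono (fun a b h => Or.inl h) (reach_last (r := G.Adj) l hne hc x hxl)
    have h2 : Relation.ReflTransGen (fun a b => (a, b) ∈ biarcsOf l) (l.getLast hne) w :=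
      rtg_mono (fun a b h => Or.inr h) (last_reach (r := G.Adj) l hne hc w hwl)
    exact h1.trans h2

/-- lower bound: c strong subgraphs exist -/
lemma lambdaS_ge (G : SimpleGraph V) (u v : V) (huv : u ≠ v) (c : ℕ)
    (H : ∀ F : Set (Sym2 V), F ⊆ G.edgeSet → F.ncard < c →
      (G.deleteEdges F).Connected) :
    ∃ f : Fin c → Set (V × V),
      (∀ i, G.biorient.IsStrongSubgraphOn {u, v} (f i)) ∧
      ∀ i j, i ≠ j → Disjoint (f i) (f j) := by
  classical
  obtain ⟨F, hF⟩ := flow_exists G u v huv c H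
  obtain ⟨f, hsub, hpath, hdisj⟩ := flow_decomp G u v huv c F hF
  choose l hne hnd hchain hh hl harcs using hpath
  refine ⟨fun i => biarcsOf (l i), ?_, ?_⟩
  · intro i
    exact strong_of_path G u v (l i) (hne i) (hchain i) (hh i) (hl i)
  · intro i j hij
    rw [Set.disjoint_left]
    rintro p (hp | hp) (hq | hq)
    · exact Set.disjoint_left.1 (hdisj i j hij) (harcs i ▸ hp) (harcs j ▸ hq)
    · exact hF.2.1 _ (hsub i (harcs i ▸ hp)) (by
        have := hsub j (harcs j ▸ hq); simpa [Prod.swap] using this)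
    · exact hF.2.1 _ (hsub j (harcs j ▸ hq)) (by
        have := hsub i (harcs i ▸ hp); simpa [Prod.swap] using this)
    · exact Set.disjoint_left.1 (hdisj i j hij) (harcs i ▸ hp) (harcs j ▸ hq)

lemma lambdaS_set_bddAbove (D : Digraph V) (u v : V) (huv : u ≠ v) :
    ∀ k ∈ {k | ∃ f : Fin k → Set (V × V),
      (∀ i, D.IsStrongSubgraphOn {u, v} (f i)) ∧
      ∀ i j, i ≠ j → Disjoint (f i) (f j)}, k ≤ Fintype.card (V × V) := by
  classical
  rintro k ⟨f, hstrong, hdisj⟩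
  have hnon : ∀ i, ∃ p, p ∈ f i := by
    intro i
    have h := (hstrong i).2 u (Or.inl (by simp)) v (Or.inl (by simp))
    rcases Relation.ReflTransGen.cases_head h with h1 | ⟨c, hc, -⟩
    · exact absurd h1 huv
    · exact ⟨(u, c), hc⟩
  choose p hp using hnon
  have hinj : Function.Injective p := by
    intro i j hij
    by_contra hne
    exact Set.disjoint_left.1 (hdisj i j hne) (hp i) (hij ▸ hp j)
  simpa using Fintype.card_le_of_injective p hinj

/-- each strong subgraph on a separated pair uses ≥2 crossing arcs; bound count. -/
lemma lambdaS_le_cut (G : SimpleGraph V) (Fs : Set (Sym2 V)) (hFs : Fs ⊆ G.edgeSet)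
    (u v : V) (hvu : ¬ (G.deleteEdges Fs).Reachable u v) :
    ∀ k ∈ {k | ∃ f : Fin k → Set (V × V),
      (∀ i, G.biorient.IsStrongSubgraphOn {u, v} (f i)) ∧
      ∀ i j, i ≠ j → Disjoint (f i) (f j)}, k ≤ Fs.ncard := by
  classical
  rintro k ⟨f, hstrong, hdisj⟩
  have huv : u ≠ v := fun h => hvu (h ▸ SimpleGraph.Reachable.refl u)
  set A : Set V := {x | (G.deleteEdges Fs).Reachable u x} with hA
  have huA : u ∈ A := SimpleGraph.Reachable.refl u
  have hvA : v ∉ A := hvu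
  have hcross : ∀ x y, G.Adj x y → x ∈ A → y ∉ A → s(x, y) ∈ Fs := by
    intro x y hxy hx hy
    by_contra h
    exact hy (hx.trans (SimpleGraph.Adj.reachable (by rw [SimpleGraph.deleteEdges_adj]; exact ⟨hxy, h⟩)))
  -- the set of crossing arcs
  set T : Set (V × V) := {p | G.Adj p.1 p.2 ∧ s(p.1, p.2) ∈ Fs} with hT
  -- T has at most 2 * Fs.ncard elements
  have hTcard : T.ncard ≤ 2 * Fs.ncard := by
    set φ := (Fintype.equivFin V)
    have hinj : Set.InjOn (fun p : V × V => (s(p.1, p.2), decide (φ p.1 < φ p.2))) T := by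
      rintro p hp q hq heq
      simp only [Prod.mk.injEq] at heq
      obtain ⟨h1, h2⟩ := heq
      rcases (Sym2.eq_iff).1 h1 with ⟨ha, hb⟩ | ⟨ha, hb⟩
      · exact Prod.ext ha hb
      · exfalso
        rw [ha, hb] at h2
        have h2' := decide_eq_decide.1 h2
        have hne : φ q.1 ≠ φ q.2 := fun h => (hq.1.ne) (φ.injective h)
        rcases lt_or_gt_of_ne hne with h | h
        · exact absurd (h2'.2 h) (not_lt_of_gt h)
        · exact absurd (h2'.1 h) (not_lt_of_gt h)
    have hmaps : Set.MapsTo (fun p : V × V => (s(p.1, p.2), decide (φ p.1 < φ p.2))) T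
        (Fs ×ˢ (Set.univ : Set Bool)) := by
      rintro p ⟨h1, h2⟩
      exact ⟨h2, trivial⟩
    have := Set.ncard_le_ncard_of_injOn _ hmaps hinj (Set.toFinite _)
    calc T.ncard ≤ (Fs ×ˢ (Set.univ : Set Bool)).ncard := this
      _ ≤ 2 * Fs.ncard := by
        have e : ↥(Fs ×ˢ (Set.univ : Set Bool)) ≃ ↥Fs × ↥(Set.univ : Set Bool) :=
          Equiv.Set.prod _ _
        have h1 : (Fs ×ˢ (Set.univ : Set Bool)).ncard = Fs.ncard * 2 := by
          rw [← Nat.card_coe_set_eq, Nat.card_congr e, Nat.card_prod,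
            Nat.card_coe_set_eq, Nat.card_coe_set_eq, Set.ncard_univ,
            Nat.card_eq_fintype_card, Fintype.card_bool]
        omega
  -- each f i contains two distinct elements of T
  have htwo : ∀ i, ∃ a b : V × V, a ≠ b ∧ a ∈ f i ∩ T ∧ b ∈ f i ∩ T := by
    intro i
    obtain ⟨hsub, hreach⟩ := hstrong i
    have h1 := hreach u (Or.inl (by simp)) v (Or.inl (by simp))
    have h2 := hreach v (Or.inl (by simp)) u (Or.inl (by simp))
    obtain ⟨a1, b1, hab1, ha1, hb1⟩ := exists_crossing h1 huA hvA
    obtain ⟨a2, b2, hab2, ha2, hb2⟩ :=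
      exists_crossing (A := Aᶜ) h2 hvA (by simpa using huA)
    refine ⟨(a1, b1), (a2, b2), ?_, ?_, ?_⟩
    · intro h
      rw [Prod.mk.injEq] at h
      exact (h.1 ▸ ha2) ha1
    · exact ⟨hab1, hsub hab1, hcross a1 b1 (hsub hab1) ha1 hb1⟩
    · refine ⟨hab2, hsub hab2, ?_⟩
      have : s(b2, a2) ∈ Fs := hcross b2 a2 (hsub hab2 : G.Adj a2 b2).symm (by simpa using hb2) ha2
      rwa [Sym2.eq_swap] at this
  -- injective map Fin k × Bool → T
  choose a b hab ha hb using htwo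
  have hk2 : 2 * k ≤ T.ncard := by
    have hinj : Set.InjOn (fun q : Fin k × Bool => if q.2 then a q.1 else b q.1)
        (Set.univ : Set (Fin k × Bool)) := by
      rintro ⟨i, bi⟩ - ⟨j, bj⟩ - heq
      simp only at heq
      have hmem : ∀ (i : Fin k) (c : Bool), (if c then a i else b i) ∈ f i := by
        intro i c; cases c
        · simp [(hb i).1]
        · simp [(ha i).1]
      have hij : i = j := by
        by_contra hne
        have h1 := hmem i bi
        have h2 := hmem j bj
        rw [heq] at h1
        exact Set.disjoint_left.1 (hdisj i j hne) h1 h2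
      subst hij
      cases bi <;> cases bj
      · rfl
      · exact absurd ((if_neg (by simp)).symm.trans (heq.trans (if_pos rfl))).symm (hab i)
      · exact absurd ((if_pos rfl).symm.trans (heq.trans (if_neg (by simp)))) (hab i)
      · rfl
    have hmaps : Set.MapsTo (fun q : Fin k × Bool => if q.2 then a q.1 else b q.1)
        (Set.univ : Set (Fin k × Bool)) T := by
      rintro ⟨i, c⟩ -
      cases c
      · simpa using (hb i).2
      · simpa using (ha i).2
    have h := Set.ncard_le_ncard_of_injOn _ hmaps hinj (Set.toFinite _)
    rw [Set.ncard_univ, Nat.card_eq_fintype_card, Fintype.card_prod, Fintype.card_fin,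
      Fintype.card_bool] at h
    omega
  omega

end

theorem stmt8 {V : Type*} [Fintype V] (G : SimpleGraph V) :
    G.biorient.lambdaK 2 = G.edgeConn := by
  classical
  by_cases hVtriv : ∀ u v : V, u = v
  · -- trivial vertex set
    have hM : {m | ∃ S : Set V, S.ncard = 2 ∧ G.biorient.lambdaS S = m} = ∅ := by
      ext m
      simp only [Set.mem_setOf_eq, Set.mem_empty_iff_false, iff_false, not_exists]
      rintro S ⟨hS, -⟩
      obtain ⟨a, b, hab, -⟩ := Set.ncard_eq_two.1 hS
      exact hab (hVtriv a b)
    have h1 : G.biorient.lambdaK 2 = 0 := by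
      rw [Digraph.lambdaK, hM, Nat.sInf_empty]
    rw [h1]
    by_cases hV : Nonempty V
    · have hC : {k | ∃ F : Set (Sym2 V), F ⊆ G.edgeSet ∧ F.ncard = k ∧
          ¬ (G.deleteEdges F).Connected} = ∅ := by
        ext k
        simp only [Set.mem_setOf_eq, Set.mem_empty_iff_false, iff_false, not_exists]
        rintro F ⟨-, -, h3⟩
        haveI := hV
        exact h3 ⟨fun x y => hVtriv x y ▸ SimpleGraph.Reachable.refl x⟩
      rw [SimpleGraph.edgeConn, hC, Nat.sInf_empty]
    · have h0 : 0 ∈ {k | ∃ F : Set (Sym2 V), F ⊆ G.edgeSet ∧ F.ncard = k ∧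
          ¬ (G.deleteEdges F).Connected} :=
        ⟨∅, by simp, by simp, fun h => hV h.nonempty⟩
      have := Nat.sInf_le h0
      rw [SimpleGraph.edgeConn]
      omega
  · push_neg at hVtriv
    obtain ⟨u₀, v₀, huv₀⟩ := hVtriv
    set c := G.edgeConn with hc
    set C := {k | ∃ F : Set (Sym2 V), F ⊆ G.edgeSet ∧ F.ncard = k ∧
      ¬ (G.deleteEdges F).Connected} with hCdef
    have hH : ∀ F : Set (Sym2 V), F ⊆ G.edgeSet → F.ncard < c →
        (G.deleteEdges F).Connected := by
      intro F h1 h2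
      by_contra h3
      have : F.ncard ∈ C := ⟨F, h1, rfl, h3⟩
      have := Nat.sInf_le this
      rw [hc, SimpleGraph.edgeConn, ← hCdef] at h2
      omega
    -- lower bound: c ≤ lambdaK
    have hlow : c ≤ G.biorient.lambdaK 2 := by
      rw [Digraph.lambdaK]
      refine le_csInf ⟨G.biorient.lambdaS {u₀, v₀}, {u₀, v₀}, Set.ncard_pair huv₀, rfl⟩ ?_
      rintro m ⟨S, hS, rfl⟩
      obtain ⟨x, y, hxy, rfl⟩ := Set.ncard_eq_two.1 hS
      rw [Digraph.lambdaS]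
      refine le_csSup ?_ ?_
      · exact ⟨Fintype.card (V × V), fun k hk => lambdaS_set_bddAbove G.biorient x y hxy k hk⟩
      · obtain ⟨f, h1, h2⟩ := lambdaS_ge G x y hxy c hH
        exact ⟨f, h1, h2⟩
    -- upper bound
    have hup : G.biorient.lambdaK 2 ≤ c := by
      have hCne : C.Nonempty := by
        refine ⟨G.edgeSet.ncard, G.edgeSet, le_refl _, rfl, ?_⟩
        intro h
        have hr := h.preconnected u₀ v₀
        rw [SimpleGraph.reachable_iff_reflTransGen] at hr
        have : u₀ = v₀ := by
          have : ∀ a b : V, (G.deleteEdges G.edgeSet).Adj a b → False := by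
            intro a b hab
            rw [SimpleGraph.deleteEdges_adj] at hab
            exact hab.2 hab.1
          induction hr with
          | refl => rfl
          | tail _ hbc ih => exact absurd hbc (this _ _)
        exact huv₀ this
      have hcC : c ∈ C := by
        rw [hc, SimpleGraph.edgeConn, ← hCdef]
        exact Nat.sInf_mem hCne
      obtain ⟨Fs, hFs, hFscard, hFsnc⟩ := hcC
      have hNV : Nonempty V := ⟨u₀⟩
      rw [SimpleGraph.connected_iff] at hFsnc
      push_neg at hFsnc
      have hnp : ¬ (G.deleteEdges Fs).Preconnected := fun h => (hFsnc h).elim u₀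
      rw [SimpleGraph.Preconnected] at hnp
      push_neg at hnp
      obtain ⟨u, v, hvu⟩ := hnp
      have huv : u ≠ v := fun h => hvu (h ▸ SimpleGraph.Reachable.refl u)
      have h1 : G.biorient.lambdaK 2 ≤ G.biorient.lambdaS {u, v} := by
        rw [Digraph.lambdaK]
        exact Nat.sInf_le ⟨{u, v}, Set.ncard_pair huv, rfl⟩
      have h2 : G.biorient.lambdaS {u, v} ≤ c := by
        rw [Digraph.lambdaS]
        refine csSup_le ⟨0, fun i => i.elim0, fun i => i.elim0, fun i j h => i.elim0⟩ ?_
        intro k hk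
        rw [← hFscard]
        exact lambdaS_le_cut G Fs hFs u v hvu k hk
      omega
    omega
end

section
/- For strong digraphs G and H, if x and y are two vertices of G □ H lying in a common copy of G or a common copy of H (i.e., they agree in one coordinate), then λ_{x,y}(G □ H) ≥ λ_2(G) + λ_2(H), where λ_{x,y} is the maximum number of pairwise arc-disjoint strongly connected subgraphs containing both x and y. -/
section Aux
open Relation Set

variable {V W : Type*}

namespace Digraph

/-- Remove loop arcs. -/
def deloop (B : Set (V × V)) : Set (V × V) := {p ∈ B | p.1 ≠ p.2}

lemma deloop_subset (B : Set (V × V)) : deloop B ⊆ B := fun _ hp => hp.1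

lemma rtg_deloop {B : Set (V × V)} {a b : V}
    (h : Relation.ReflTransGen (fun x y => (x, y) ∈ B) a b) :
    Relation.ReflTransGen (fun x y => (x, y) ∈ deloop B) a b := by
  induction h with
  | refl => exact .refl
  | tail _ hstep ih =>
    rename_i b c _
    by_cases hc : b = c
    · exact hc ▸ ih
    · exact ih.tail ⟨hstep, hc⟩

lemma strong_deloop {D : Digraph V} {S : Set V} {B : Set (V × V)}
    (h : D.IsStrongSubgraphOn S B) : D.IsStrongSubgraphOn S (deloop B) := by
  refine ⟨fun p hp => h.1 (deloop_subset B hp), fun a ha b hb => ?_⟩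
  have hsub : S ∪ {v | ∃ e ∈ deloop B, v = e.1 ∨ v = e.2}
      ⊆ S ∪ {v | ∃ e ∈ B, v = e.1 ∨ v = e.2} := by
    apply Set.union_subset_union_right
    rintro v ⟨e, he, hv⟩
    exact ⟨e, deloop_subset B he, hv⟩
  exact rtg_deloop (h.2 a (hsub ha) b (hsub hb))

lemma strong_nonempty {D : Digraph V} {S : Set V} {B : Set (V × V)} {a b : V}
    (hab : a ≠ b) (ha : a ∈ S) (hb : b ∈ S) (h : D.IsStrongSubgraphOn S B) :
    B.Nonempty := by
  rcases (h.2 a (Or.inl ha) b (Or.inl hb)).cases_head with h1 | ⟨c, hc, _⟩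
  · exact absurd h1 hab
  · exact ⟨(a, c), hc⟩

lemma bddAbove_family [Fintype V] (D : Digraph V) {S : Set V} {a b : V}
    (hab : a ≠ b) (ha : a ∈ S) (hb : b ∈ S) :
    BddAbove {k | ∃ f : Fin k → Set (V × V),
      (∀ i, D.IsStrongSubgraphOn S (f i)) ∧ ∀ i j, i ≠ j → Disjoint (f i) (f j)} := by
  refine ⟨Fintype.card (V × V), ?_⟩
  rintro k ⟨f, hf, hdisj⟩
  have hne : ∀ i, (f i).Nonempty := fun i => strong_nonempty hab ha hb (hf i)
  choose e he using hne
  have hinj : Function.Injective e := by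
    intro i j hij
    by_contra hne'
    exact (Set.disjoint_left.mp (hdisj i j hne') (he i)) (hij ▸ he j)
  simpa using Fintype.card_le_of_injective e hinj

lemma zero_mem_family (D : Digraph V) (S : Set V) :
    0 ∈ {k | ∃ f : Fin k → Set (V × V),
      (∀ i, D.IsStrongSubgraphOn S (f i)) ∧ ∀ i j, i ≠ j → Disjoint (f i) (f j)} :=
  ⟨fun i => i.elim0, fun i => i.elim0, fun i => i.elim0⟩

lemma exists_family [Fintype V] {D : Digraph V} {S : Set V} {a b : V}
    (hab : a ≠ b) (ha : a ∈ S) (hb : b ∈ S) {n : ℕ} (hn : n ≤ D.lambdaS S) :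
    ∃ f : Fin n → Set (V × V),
      (∀ i, D.IsStrongSubgraphOn S (f i)) ∧ ∀ i j, i ≠ j → Disjoint (f i) (f j) := by
  have hT := Nat.sSup_mem ⟨0, zero_mem_family D S⟩ (bddAbove_family D hab ha hb)
  obtain ⟨f, hf, hdisj⟩ := hT
  exact ⟨fun i => f (Fin.castLE hn i), fun i => hf _,
    fun i j hij => hdisj _ _ (fun h => hij (Fin.castLE_injective hn h))⟩

lemma lambdaK_le_pair {D : Digraph V} {a b : V} (hab : a ≠ b) :
    D.lambdaK 2 ≤ D.lambdaS {a, b} :=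
  Nat.sInf_le ⟨{a, b}, Set.ncard_pair hab, rfl⟩

end Digraph
end Aux

section Aux2
open Relation Set

variable {V W : Type*}

namespace Digraph

/-- Lift a `G`-arc set to the copy of `G` at level `w`. -/
def liftFst (B : Set (V × V)) (w : W) : Set ((V × W) × (V × W)) :=
  {p | (p.1.1, p.2.1) ∈ B ∧ p.1.2 = w ∧ p.2.2 = w}

/-- Lift an `H`-arc set to the copy of `H` at level `u`. -/
def liftSnd (B : Set (W × W)) (u : V) : Set ((V × W) × (V × W)) :=
  {p | (p.1.2, p.2.2) ∈ B ∧ p.1.1 = u ∧ p.2.1 = u}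

lemma rtg_liftFst {B : Set (V × V)} {a b : V} (w : W)
    (h : Relation.ReflTransGen (fun x y => (x, y) ∈ B) a b) :
    Relation.ReflTransGen (fun p q : V × W => (p, q) ∈ liftFst B w) (a, w) (b, w) :=
  Relation.ReflTransGen.lift (p := fun p q : V × W => (p, q) ∈ liftFst B w) (fun c => (c, w))
    (fun a b hxy => (⟨hxy, rfl, rfl⟩ : ((a, w), (b, w)) ∈ liftFst B w)) _ _ h

lemma rtg_liftSnd {B : Set (W × W)} {a b : W} (u : V)
    (h : Relation.ReflTransGen (fun x y => (x, y) ∈ B) a b) :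
    Relation.ReflTransGen (fun p q : V × W => (p, q) ∈ liftSnd B u) (u, a) (u, b) :=
  Relation.ReflTransGen.lift (p := fun p q : V × W => (p, q) ∈ liftSnd B u) (fun c => (u, c))
    (fun a b hxy => (⟨hxy, rfl, rfl⟩ : ((u, a), (u, b)) ∈ liftSnd B u)) _ _ h

lemma mem_ep_liftFst {B : Set (V × V)} {w : W} {p : V × W}
    (hp : p ∈ {v | ∃ e ∈ liftFst B w, v = e.1 ∨ v = e.2}) :
    p.2 = w ∧ p.1 ∈ {v | ∃ e ∈ B, v = e.1 ∨ v = e.2} := by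
  obtain ⟨e, ⟨heB, h1, h2⟩, hv⟩ := hp
  rcases hv with rfl | rfl
  · exact ⟨h1, ⟨(e.1.1, e.2.1), heB, Or.inl rfl⟩⟩
  · exact ⟨h2, ⟨(e.1.1, e.2.1), heB, Or.inr rfl⟩⟩

lemma mem_ep_liftSnd {B : Set (W × W)} {u : V} {p : V × W}
    (hp : p ∈ {v | ∃ e ∈ liftSnd B u, v = e.1 ∨ v = e.2}) :
    p.1 = u ∧ p.2 ∈ {v | ∃ e ∈ B, v = e.1 ∨ v = e.2} := by
  obtain ⟨e, ⟨heB, h1, h2⟩, hv⟩ := hp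
  rcases hv with rfl | rfl
  · exact ⟨h1, ⟨(e.1.2, e.2.2), heB, Or.inl rfl⟩⟩
  · exact ⟨h2, ⟨(e.1.2, e.2.2), heB, Or.inr rfl⟩⟩

/-- A lifted `{u,v}`-strong subgraph of `G` at level `w` is `{(u,w),(v,w)}`-strong. -/
lemma strong_liftFst {G : Digraph V} (H : Digraph W) {u v : V} {fB : Set (V × V)} (w : W)
    (hf : G.IsStrongSubgraphOn {u, v} fB) :
    (G.cartProd H).IsStrongSubgraphOn {(u, w), (v, w)} (liftFst fB w) := by
  constructor
  · rintro ⟨p1, p2⟩ ⟨hB, h1, h2⟩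
    exact Or.inl ⟨hf.1 hB, h1.trans h2.symm⟩
  · intro p hp q hq
    have key : ∀ r : V × W, r ∈ ({(u, w), (v, w)} : Set (V × W)) ∪
        {v | ∃ e ∈ liftFst fB w, v = e.1 ∨ v = e.2} →
        r.2 = w ∧ r.1 ∈ ({u, v} : Set V) ∪ {v | ∃ e ∈ fB, v = e.1 ∨ v = e.2} := by
      rintro r (hr | hr)
      · rcases hr with rfl | rfl
        · exact ⟨rfl, Or.inl (Or.inl rfl)⟩
        · exact ⟨rfl, Or.inl (Or.inr rfl)⟩
      · obtain ⟨h2, h1⟩ := mem_ep_liftFst hr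
        exact ⟨h2, Or.inr h1⟩
    obtain ⟨hp2, hp1⟩ := key p hp
    obtain ⟨hq2, hq1⟩ := key q hq
    have := rtg_liftFst (B := fB) w (hf.2 p.1 hp1 q.1 hq1)
    have hpe : p = (p.1, w) := by rw [← hp2]
    have hqe : q = (q.1, w) := by rw [← hq2]
    rw [hpe, hqe]
    exact this

/-- The "H-copy at u, H-copy at v, G-copy at z" construction is strong. -/
lemma strong_hub {G : Digraph V} {H : Digraph W} (hG : G.IsStrong)
    {w w' : W} {gB : Set (W × W)} (hg : H.IsStrongSubgraphOn {w, w'} gB)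
    (u v : V) {z : W} (hz : (w, z) ∈ gB) :
    (G.cartProd H).IsStrongSubgraphOn {(u, w), (v, w)}
      (liftSnd gB u ∪ liftSnd gB v ∪ liftFst G.ArcSet z) := by
  set D : Set ((V × W) × (V × W)) := liftSnd gB u ∪ liftSnd gB v ∪ liftFst G.ArcSet z with hD
  have hzep : z ∈ ({w, w'} : Set W) ∪ {v | ∃ e ∈ gB, v = e.1 ∨ v = e.2} :=
    Or.inr ⟨(w, z), hz, Or.inr rfl⟩
  have hsubU : liftSnd gB u ⊆ D := fun p hp => Or.inl (Or.inl hp)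
  have hsubV : liftSnd gB v ⊆ D := fun p hp => Or.inl (Or.inr hp)
  have hsubG : liftFst G.ArcSet z ⊆ D := fun p hp => Or.inr hp
  have reachHu : ∀ c ∈ ({w, w'} : Set W) ∪ {v | ∃ e ∈ gB, v = e.1 ∨ v = e.2},
      ∀ c' ∈ ({w, w'} : Set W) ∪ {v | ∃ e ∈ gB, v = e.1 ∨ v = e.2},
      Relation.ReflTransGen (fun p q : V × W => (p, q) ∈ D) (u, c) (u, c') :=
    fun c hc c' hc' => Relation.ReflTransGen.mono (fun _ _ h => hsubU h) _ _ (rtg_liftSnd u (hg.2 c hc c' hc'))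
  have reachHv : ∀ c ∈ ({w, w'} : Set W) ∪ {v | ∃ e ∈ gB, v = e.1 ∨ v = e.2},
      ∀ c' ∈ ({w, w'} : Set W) ∪ {v | ∃ e ∈ gB, v = e.1 ∨ v = e.2},
      Relation.ReflTransGen (fun p q : V × W => (p, q) ∈ D) (v, c) (v, c') :=
    fun c hc c' hc' => Relation.ReflTransGen.mono (fun _ _ h => hsubV h) _ _ (rtg_liftSnd v (hg.2 c hc c' hc'))
  have reachG : ∀ a b : V,
      Relation.ReflTransGen (fun p q : V × W => (p, q) ∈ D) (a, z) (b, z) :=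
    fun a b => Relation.ReflTransGen.mono (fun _ _ h => hsubG h) _ _ (rtg_liftFst (B := G.ArcSet) z (hG a b))
  constructor
  · rintro ⟨p1, p2⟩ hp
    rcases hp with (⟨hB, h1, h2⟩ | ⟨hB, h1, h2⟩) | ⟨hB, h1, h2⟩
    · exact Or.inr ⟨h1.trans h2.symm, hg.1 hB⟩
    · exact Or.inr ⟨h1.trans h2.symm, hg.1 hB⟩
    · exact Or.inl ⟨hB, h1.trans h2.symm⟩
  · intro p hp q hq
    have classify : ∀ r : V × W, r ∈ ({(u, w), (v, w)} : Set (V × W)) ∪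
        {v_1 | ∃ e ∈ D, v_1 = e.1 ∨ v_1 = e.2} →
        (r.1 = u ∧ r.2 ∈ ({w, w'} : Set W) ∪ {v | ∃ e ∈ gB, v = e.1 ∨ v = e.2}) ∨
        (r.1 = v ∧ r.2 ∈ ({w, w'} : Set W) ∪ {v | ∃ e ∈ gB, v = e.1 ∨ v = e.2}) ∨
        r.2 = z := by
      rintro r (hr | hr)
      · rcases hr with rfl | rfl
        · exact Or.inl ⟨rfl, Or.inl (Or.inl rfl)⟩
        · exact Or.inr (Or.inl ⟨rfl, Or.inl (Or.inl rfl)⟩)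
      · obtain ⟨e, he, hv⟩ := hr
        rcases he with (he | he) | he
        · exact Or.inl ((mem_ep_liftSnd ⟨e, he, hv⟩).imp id (fun h => Or.inr h))
        · exact Or.inr (Or.inl ((mem_ep_liftSnd ⟨e, he, hv⟩).imp id (fun h => Or.inr h)))
        · exact Or.inr (Or.inr (mem_ep_liftFst ⟨e, he, hv⟩).1)
    have toHub : ∀ r : V × W, r ∈ ({(u, w), (v, w)} : Set (V × W)) ∪
        {v_1 | ∃ e ∈ D, v_1 = e.1 ∨ v_1 = e.2} →
        Relation.ReflTransGen (fun p q : V × W => (p, q) ∈ D) r (u, z) := by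
      intro r hr
      rcases classify r hr with ⟨h1, h2⟩ | ⟨h1, h2⟩ | h1
      · have : r = (u, r.2) := by rw [← h1]
        rw [this]; exact reachHu r.2 h2 z hzep
      · have : r = (v, r.2) := by rw [← h1]
        rw [this]
        exact (reachHv r.2 h2 z hzep).trans (reachG v u)
      · have : r = (r.1, z) := by rw [← h1]
        rw [this]; exact reachG r.1 u
    have fromHub : ∀ r : V × W, r ∈ ({(u, w), (v, w)} : Set (V × W)) ∪
        {v_1 | ∃ e ∈ D, v_1 = e.1 ∨ v_1 = e.2} →
        Relation.ReflTransGen (fun p q : V × W => (p, q) ∈ D) (u, z) r := by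
      intro r hr
      rcases classify r hr with ⟨h1, h2⟩ | ⟨h1, h2⟩ | h1
      · have : r = (u, r.2) := by rw [← h1]
        rw [this]; exact reachHu z hzep r.2 h2
      · have : r = (v, r.2) := by rw [← h1]
        rw [this]
        exact (reachG u v).trans (reachHv z hzep r.2 h2)
      · have : r = (r.1, z) := by rw [← h1]
        rw [this]; exact reachG u r.1
    exact (toHub p hp).trans (fromHub q hq)

end Digraph
end Aux2

section Aux3
open Relation Set

variable {V W : Type*}

namespace Digraph

lemma deloop_loopless (B : Set (V × V)) : ∀ p ∈ deloop B, (p : V × V).1 ≠ p.2 :=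
  fun _ hp => hp.2

lemma disj_liftFst {B B' : Set (V × V)} {w : W} (h : Disjoint B B') :
    Disjoint (liftFst B w) (liftFst B' w) := by
  rw [Set.disjoint_left] at h ⊢
  rintro p ⟨hB, _, _⟩ ⟨hB', _, _⟩
  exact h hB hB'

lemma disj_liftSnd {B B' : Set (W × W)} {u : V} (h : Disjoint B B') :
    Disjoint (liftSnd B u) (liftSnd B' u) := by
  rw [Set.disjoint_left] at h ⊢
  rintro p ⟨hB, _, _⟩ ⟨hB', _, _⟩
  exact h hB hB'

lemma disj_liftSnd_ne {B B' : Set (W × W)} {u v : V} (h : u ≠ v) :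
    Disjoint (liftSnd B u) (liftSnd B' v) := by
  rw [Set.disjoint_left]
  rintro p ⟨_, h1, _⟩ ⟨_, h1', _⟩
  exact h (h1 ▸ h1' ▸ rfl)

lemma disj_liftFst_ne {B B' : Set (V × V)} {w w' : W} (h : w ≠ w') :
    Disjoint (liftFst B w) (liftFst B' w') := by
  rw [Set.disjoint_left]
  rintro p ⟨_, h1, _⟩ ⟨_, h1', _⟩
  exact h (h1 ▸ h1' ▸ rfl)

lemma disj_liftFst_liftSnd {B : Set (V × V)} {C : Set (W × W)} {w : W} {u : V}
    (hB : ∀ p ∈ B, (p : V × V).1 ≠ p.2) : Disjoint (liftFst B w) (liftSnd C u) := by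
  rw [Set.disjoint_left]
  rintro p ⟨hB1, _, _⟩ ⟨_, h1, h2⟩
  exact hB _ hB1 (h1.trans h2.symm)

lemma disj_liftSnd_liftFst {C : Set (W × W)} {B : Set (V × V)} {u : V} {w : W}
    (hC : ∀ p ∈ C, (p : W × W).1 ≠ p.2) : Disjoint (liftSnd C u) (liftFst B w) := by
  rw [Set.disjoint_left]
  rintro p ⟨hC1, _, _⟩ ⟨_, h1, h2⟩
  exact hC _ hC1 (h1.trans h2.symm)

lemma core [Fintype V] [Fintype W] (G : Digraph V) (H : Digraph W)
    (hG : G.IsStrong) (hH : H.IsStrong) {u v : V} (huv : u ≠ v) (w : W) :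
    G.lambdaK 2 + H.lambdaK 2 ≤ (G.cartProd H).lambdaS {(u, w), (v, w)} := by
  have hxy : ((u, w) : V × W) ≠ (v, w) := fun h => huv (congrArg Prod.fst h)
  obtain ⟨f0, hf0s, hf0d⟩ := exists_family huv (Set.mem_insert u {v})
    (Set.mem_insert_of_mem u rfl) (lambdaK_le_pair huv)
  set f : Fin (G.lambdaK 2) → Set (V × V) := fun i => deloop (f0 i) with hf
  have hfs : ∀ i, G.IsStrongSubgraphOn {u, v} (f i) := fun i => strong_deloop (hf0s i)
  have hfd : ∀ i j, i ≠ j → Disjoint (f i) (f j) :=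
    fun i j hij => (hf0d i j hij).mono (deloop_subset _) (deloop_subset _)
  by_cases hW : ∃ w' : W, w' ≠ w
  · obtain ⟨w', hw'⟩ := hW
    have hww' : w ≠ w' := hw'.symm
    obtain ⟨g0, hg0s, hg0d⟩ := exists_family hww' (Set.mem_insert w {w'})
      (Set.mem_insert_of_mem w rfl) (lambdaK_le_pair hww')
    set g : Fin (H.lambdaK 2) → Set (W × W) := fun j => deloop (g0 j) with hgdef
    have hgs : ∀ j, H.IsStrongSubgraphOn {w, w'} (g j) := fun j => strong_deloop (hg0s j)
    have hgd : ∀ i j, i ≠ j → Disjoint (g i) (g j) :=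
      fun i j hij => (hg0d i j hij).mono (deloop_subset _) (deloop_subset _)
    have hzex : ∀ j : Fin (H.lambdaK 2), ∃ zc : W, (w, zc) ∈ g j ∧ zc ≠ w := by
      intro j
      have hr := (hgs j).2 w (Or.inl (Set.mem_insert w {w'}))
        w' (Or.inl (Set.mem_insert_of_mem w rfl))
      rcases hr.cases_head with h1 | ⟨c, hc, _⟩
      · exact absurd h1 hww'
      · exact ⟨c, hc, Ne.symm hc.2⟩
    choose z hz hzw using hzex
    have hzinj : Function.Injective z := by
      intro j j' h
      by_contra hne
      have : (w, z j) ∈ g j' := by rw [h]; exact hz j'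
      exact (Set.disjoint_left.mp (hgd j j' hne) (hz j)) this
    refine le_csSup (bddAbove_family _ hxy (Set.mem_insert _ _)
      (Set.mem_insert_of_mem _ rfl)) ?_
    refine ⟨fun i : Fin (G.lambdaK 2 + H.lambdaK 2) =>
      if h : (i : ℕ) < G.lambdaK 2 then liftFst (f ⟨i, h⟩) w
      else
        liftSnd (g ⟨(i : ℕ) - G.lambdaK 2, by have := i.isLt; omega⟩) u ∪
        liftSnd (g ⟨(i : ℕ) - G.lambdaK 2, by have := i.isLt; omega⟩) v ∪
        liftFst G.ArcSet (z ⟨(i : ℕ) - G.lambdaK 2, by have := i.isLt; omega⟩), ?_, ?_⟩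
    · intro i
      by_cases h : (i : ℕ) < G.lambdaK 2
      · simp only [dif_pos h]
        exact strong_liftFst H w (hfs ⟨i, h⟩)
      · simp only [dif_neg h]
        exact strong_hub hG (hgs _) u v (hz _)
    · intro i j hij
      have hval : (i : ℕ) ≠ (j : ℕ) := fun h => hij (Fin.ext h)
      by_cases hi : (i : ℕ) < G.lambdaK 2 <;> by_cases hj : (j : ℕ) < G.lambdaK 2
      · simp only [dif_pos hi, dif_pos hj]
        exact disj_liftFst (hfd ⟨i, hi⟩ ⟨j, hj⟩ (by simp [Fin.ext_iff, hval]))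
      · simp only [dif_pos hi, dif_neg hj]
        rw [Set.disjoint_union_right, Set.disjoint_union_right]
        exact ⟨⟨disj_liftFst_liftSnd (deloop_loopless _),
          disj_liftFst_liftSnd (deloop_loopless _)⟩,
          disj_liftFst_ne (Ne.symm (hzw _))⟩
      · simp only [dif_neg hi, dif_pos hj]
        rw [Set.disjoint_union_left, Set.disjoint_union_left]
        exact ⟨⟨(disj_liftFst_liftSnd (deloop_loopless _)).symm,
          (disj_liftFst_liftSnd (deloop_loopless _)).symm⟩,
          disj_liftFst_ne (hzw _)⟩
      · simp only [dif_neg hi, dif_neg hj]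
        have hsub : (⟨(i : ℕ) - G.lambdaK 2, by have := i.isLt; omega⟩ : Fin (H.lambdaK 2)) ≠
            ⟨(j : ℕ) - G.lambdaK 2, by have := j.isLt; omega⟩ := by
          simp only [ne_eq, Fin.mk.injEq]
          omega
        rw [Set.disjoint_union_left, Set.disjoint_union_left]
        refine ⟨⟨?_, ?_⟩, ?_⟩ <;>
          rw [Set.disjoint_union_right, Set.disjoint_union_right]
        · exact ⟨⟨disj_liftSnd (hgd _ _ hsub), disj_liftSnd_ne huv⟩,
            disj_liftSnd_liftFst (deloop_loopless _)⟩
        · exact ⟨⟨disj_liftSnd_ne (Ne.symm huv), disj_liftSnd (hgd _ _ hsub)⟩,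
            disj_liftSnd_liftFst (deloop_loopless _)⟩
        · exact ⟨⟨(disj_liftSnd_liftFst (deloop_loopless _)).symm,
            (disj_liftSnd_liftFst (deloop_loopless _)).symm⟩,
            disj_liftFst_ne (fun h => hsub (hzinj h))⟩
  · have hl0 : H.lambdaK 2 = 0 := by
      rw [Digraph.lambdaK]
      convert Nat.sInf_empty
      ext m
      simp only [Set.mem_setOf_eq, Set.mem_empty_iff_false, iff_false, not_exists]
      rintro S ⟨h2, -⟩
      obtain ⟨a, b, hab, rfl⟩ := Set.ncard_eq_two.mp h2
      push_neg at hW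
      exact hab ((hW a).trans (hW b).symm)
    rw [hl0, add_zero]
    refine le_csSup (bddAbove_family _ hxy (Set.mem_insert _ _)
      (Set.mem_insert_of_mem _ rfl)) ?_
    exact ⟨fun i => liftFst (f i) w, fun i => strong_liftFst H w (hfs i),
      fun i j hij => disj_liftFst (hfd i j hij)⟩

end Digraph
end Aux3

section Aux4
open Relation Set

variable {V W : Type*}

namespace Digraph

lemma strong_swap {G : Digraph V} {H : Digraph W} {S : Set (W × V)}
    {B : Set ((W × V) × (W × V))}
    (h : (H.cartProd G).IsStrongSubgraphOn S B) :
    (G.cartProd H).IsStrongSubgraphOn (Prod.swap '' S)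
      ((fun p : (W × V) × (W × V) => (p.1.swap, p.2.swap)) '' B) := by
  constructor
  · rintro e ⟨q, hq, rfl⟩
    rcases h.1 hq with ⟨h1, h2⟩ | ⟨h1, h2⟩
    · exact Or.inr ⟨h2, h1⟩
    · exact Or.inl ⟨h2, h1⟩
  · intro p hp q hq
    have key : ∀ r : V × W, r ∈ (Prod.swap '' S) ∪
        {v | ∃ e ∈ (fun p : (W × V) × (W × V) => (p.1.swap, p.2.swap)) '' B,
          v = e.1 ∨ v = e.2} →
        r.swap ∈ S ∪ {v | ∃ e ∈ B, v = e.1 ∨ v = e.2} := by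
      rintro r (⟨s, hs, rfl⟩ | ⟨e, ⟨e0, he0, rfl⟩, hv⟩)
      · simpa using Or.inl hs
      · rcases hv with rfl | rfl
        · exact Or.inr ⟨e0, he0, Or.inl (by simp)⟩
        · exact Or.inr ⟨e0, he0, Or.inr (by simp)⟩
    have hr := h.2 p.swap (key p hp) q.swap (key q hq)
    have hlift := Relation.ReflTransGen.lift
      (r := fun a b : W × V => (a, b) ∈ B)
      (p := fun s t : V × W =>
        (s, t) ∈ (fun p : (W × V) × (W × V) => (p.1.swap, p.2.swap)) '' B)
      Prod.swap (fun a b hab => (⟨(a, b), hab, rfl⟩ :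
        (a.swap, b.swap) ∈ (fun p : (W × V) × (W × V) => (p.1.swap, p.2.swap)) '' B)) _ _ hr
    simpa [Function.onFun] using hlift

lemma lambdaS_swap_le [Fintype V] [Fintype W] (G : Digraph V) (H : Digraph W)
    {x y : V × W} (hxy : x ≠ y) :
    (H.cartProd G).lambdaS {x.swap, y.swap} ≤ (G.cartProd H).lambdaS {x, y} := by
  refine csSup_le ⟨0, zero_mem_family _ _⟩ ?_
  rintro n ⟨f, hf, hd⟩
  refine le_csSup (bddAbove_family (G.cartProd H) hxy (Set.mem_insert _ _)
    (Set.mem_insert_of_mem _ rfl)) ?_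
  have hinj : Function.Injective (fun p : (W × V) × (W × V) => (p.1.swap, p.2.swap)) := by
    intro a b hab
    have h1 := congrArg (fun q : (V × W) × (V × W) => (q.1.swap, q.2.swap)) hab
    simpa [Prod.ext_iff] using h1
  refine ⟨fun i => (fun p : (W × V) × (W × V) => (p.1.swap, p.2.swap)) '' f i,
    fun i => ?_, fun i j hij => ?_⟩
  · have hs := strong_swap (hf i)
    have hSS : Prod.swap '' ({x.swap, y.swap} : Set (W × V)) = {x, y} := by
      simp [Set.image_insert_eq]
    rwa [hSS] at hs
  · exact (Set.disjoint_image_iff hinj).mpr (hd i j hij)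

end Digraph
end Aux4

theorem stmt11 {V W : Type*} [Fintype V] [Fintype W]
    (G : Digraph V) (H : Digraph W)
    (hG : G.IsStrong) (hH : H.IsStrong)
    (x y : V × W) (hxy : x ≠ y) (hco : x.1 = y.1 ∨ x.2 = y.2) :
    G.lambdaK 2 + H.lambdaK 2 ≤ (G.cartProd H).lambdaS {x, y} := by
  rcases hco with h1 | h2
  · obtain ⟨a, w1⟩ := x
    obtain ⟨b, w2⟩ := y
    have h1' : a = b := h1
    subst h1'
    have hne : w1 ≠ w2 := fun h => hxy (by rw [h])
    calc G.lambdaK 2 + H.lambdaK 2 = H.lambdaK 2 + G.lambdaK 2 := Nat.add_comm _ _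
      _ ≤ (H.cartProd G).lambdaS {(w1, a), (w2, a)} := Digraph.core H G hH hG hne a
      _ ≤ (G.cartProd H).lambdaS {(a, w1), (a, w2)} := Digraph.lambdaS_swap_le G H hxy
  · obtain ⟨u, w⟩ := x
    obtain ⟨v, w2⟩ := y
    have h2' : w = w2 := h2
    subst h2'
    have hne : u ≠ v := fun h => hxy (by rw [h])
    exact Digraph.core G H hG hH hne w
end

section
/- For integers n, m ≥ 3, λ_2(→C_n □ →C_m) = 2, where →C_n denotes the directed cycle on n vertices. -/
open Relation

namespace Stmt12Aux

lemma fin_val_add_one (n : ℕ) [NeZero n] (i : Fin n) :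
    ((i + 1 : Fin n) : ℕ) = ((i : ℕ) + 1) % n := by
  rw [Fin.val_add, Fin.val_one', Nat.add_mod (↑i) 1 n, Nat.mod_eq_of_lt i.isLt]

lemma dirCycle_adj_iff (n : ℕ) [NeZero n] (i j : Fin n) :
    (dirCycle n).Adj i j ↔ j = i + 1 := by
  constructor
  · intro h; exact Fin.ext (by rw [fin_val_add_one]; exact h)
  · intro h; subst h; exact fin_val_add_one n i

lemma add_one_ne {n : ℕ} [NeZero n] (hn2 : 2 ≤ n) (x : Fin n) : x + 1 ≠ x := by
  intro h
  have h1 : (1 : Fin n) = 0 := by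
    have := congrArg (· - x) h; simpa [add_sub_cancel_left] using this
  have h2 : (1 : Fin n).val = 1 % n := Fin.val_one' n
  rw [h1, Fin.val_zero, Nat.mod_eq_of_lt (by omega)] at h2
  omega

open Fin.NatCast Fin.CommRing in
lemma reach_cycle {α : Type*} {R : α → α → Prop} {n : ℕ} [NeZero n] (f : Fin n → α)
    (h : ∀ x : Fin n, R (f x) (f (x + 1))) (x y : Fin n) :
    Relation.ReflTransGen R (f x) (f y) := by
  have key : ∀ k : ℕ, Relation.ReflTransGen R (f x) (f (x + (k : Fin n))) := by
    intro k
    induction k with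
    | zero => simpa using Relation.ReflTransGen.refl
    | succ k ih =>
        rw [show x + (((k + 1 : ℕ)) : Fin n) = (x + (k : ℕ)) + 1 by push_cast; ring]
        exact ih.tail (h _)
  have h2 := key ((y - x : Fin n) : ℕ)
  rwa [Fin.cast_val_eq_self, show x + (y - x) = y by ring] at h2

variable (n m : ℕ)

/-- Arcs of the full horizontal cycle in row `r`. -/
def Hrow [NeZero n] (r : Fin m) : Set ((Fin n × Fin m) × (Fin n × Fin m)) :=
  {e | e.1.2 = r ∧ e.2.2 = r ∧ e.2.1 = e.1.1 + 1}

/-- Arcs of the full vertical cycle in column `c`. -/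
def Vcol [NeZero m] (c : Fin n) : Set ((Fin n × Fin m) × (Fin n × Fin m)) :=
  {e | e.1.1 = c ∧ e.2.1 = c ∧ e.2.2 = e.1.2 + 1}

variable {n m}
variable [NeZero n] [NeZero m]

lemma Hrow_sub (r : Fin m) :
    Hrow n m r ⊆ ((dirCycle n).cartProd (dirCycle m)).ArcSet := by
  rintro ⟨⟨x1, x2⟩, ⟨y1, y2⟩⟩ ⟨h1, h2, h3⟩
  exact Or.inl ⟨(dirCycle_adj_iff n x1 y1).mpr h3, h1.trans h2.symm⟩

lemma Vcol_sub (c : Fin n) :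
    Vcol n m c ⊆ ((dirCycle n).cartProd (dirCycle m)).ArcSet := by
  rintro ⟨⟨x1, x2⟩, ⟨y1, y2⟩⟩ ⟨h1, h2, h3⟩
  exact Or.inr ⟨h1.trans h2.symm, (dirCycle_adj_iff m x2 y2).mpr h3⟩

lemma reach_row {B : Set ((Fin n × Fin m) × (Fin n × Fin m))} {r : Fin m}
    (hB : Hrow n m r ⊆ B) (x y : Fin n) :
    Relation.ReflTransGen (fun a b => (a, b) ∈ B) (x, r) (y, r) :=
  reach_cycle (f := fun z : Fin n => ((z, r) : Fin n × Fin m))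
    (fun z => hB ⟨rfl, rfl, rfl⟩) x y

lemma reach_col {B : Set ((Fin n × Fin m) × (Fin n × Fin m))} {c : Fin n}
    (hB : Vcol n m c ⊆ B) (x y : Fin m) :
    Relation.ReflTransGen (fun a b => (a, b) ∈ B) (c, x) (c, y) :=
  reach_cycle (f := fun z : Fin m => ((c, z) : Fin n × Fin m))
    (fun z => hB ⟨rfl, rfl, rfl⟩) x y

lemma strong_of_hub {V : Type*} {D : Digraph V} {B : Set (V × V)} {S : Set V}
    (hsub : B ⊆ D.ArcSet) (P : V → Prop)
    (hS : ∀ v ∈ S, P v) (hend : ∀ e ∈ B, P e.1 ∧ P e.2) (h0 : V)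
    (hto : ∀ p, P p → Relation.ReflTransGen (fun a b => (a, b) ∈ B) p h0)
    (hfrom : ∀ p, P p → Relation.ReflTransGen (fun a b => (a, b) ∈ B) h0 p) :
    D.IsStrongSubgraphOn S B := by
  refine ⟨hsub, ?_⟩
  have key : ∀ u ∈ S ∪ {v | ∃ e ∈ B, v = e.1 ∨ v = e.2}, P u := by
    rintro u (hu | ⟨e, he, h | h⟩)
    · exact hS u hu
    · exact h ▸ (hend e he).1
    · exact h ▸ (hend e he).2
  intro u hu w hw
  exact (hto u (key u hu)).trans (hfrom w (key w hw))

lemma disj_HV (hn2 : 2 ≤ n) (r : Fin m) (c : Fin n) :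
    Disjoint (Hrow n m r) (Vcol n m c) := by
  rw [Set.disjoint_left]
  rintro e ⟨h1, h2, h3⟩ ⟨k1, k2, k3⟩
  exact add_one_ne hn2 e.1.1 (h3.symm.trans (k2.trans k1.symm))

lemma disj_HH {r r' : Fin m} (h : r ≠ r') :
    Disjoint (Hrow n m r) (Hrow n m r') := by
  rw [Set.disjoint_left]
  rintro e ⟨h1, _, _⟩ ⟨k1, _, _⟩
  exact h (h1.symm.trans k1)

lemma disj_VV {c c' : Fin n} (h : c ≠ c') :
    Disjoint (Vcol n m c) (Vcol n m c') := by
  rw [Set.disjoint_left]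
  rintro e ⟨h1, _, _⟩ ⟨k1, _, _⟩
  exact h (h1.symm.trans k1)

end Stmt12Aux

namespace Stmt12Aux

variable {n m : ℕ} [NeZero n] [NeZero m]

set_option linter.unusedSectionVars false

/-- `Hrow b ∪ Vcol c` is a strong subgraph on any `S` inside row `b` ∪ column `c`. -/
lemma strongA {S : Set (Fin n × Fin m)} (b : Fin m) (c : Fin n)
    (hS : ∀ v ∈ S, v.2 = b ∨ v.1 = c) :
    ((dirCycle n).cartProd (dirCycle m)).IsStrongSubgraphOn S (Hrow n m b ∪ Vcol n m c) := by
  apply strong_of_hub (P := fun p => p.2 = b ∨ p.1 = c)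
    (h0 := ((c, b) : Fin n × Fin m)) (Set.union_subset (Hrow_sub b) (Vcol_sub c)) hS
  · rintro ⟨⟨x1, x2⟩, ⟨y1, y2⟩⟩ (⟨h1, h2, _⟩ | ⟨h1, h2, _⟩)
    · exact ⟨Or.inl h1, Or.inl h2⟩
    · exact ⟨Or.inr h1, Or.inr h2⟩
  · rintro ⟨p1, p2⟩ (rfl | rfl)
    · exact reach_row Set.subset_union_left p1 c
    · exact reach_col Set.subset_union_right p2 b
  · rintro ⟨p1, p2⟩ (rfl | rfl)
    · exact reach_row Set.subset_union_left c p1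
    · exact reach_col Set.subset_union_right b p2

/-- `Vcol a ∪ Vcol c ∪ Hrow r` is a strong subgraph on any `S` inside the two columns. -/
lemma strongB {S : Set (Fin n × Fin m)} (a c : Fin n) (r : Fin m)
    (hS : ∀ v ∈ S, v.1 = a ∨ v.1 = c) :
    ((dirCycle n).cartProd (dirCycle m)).IsStrongSubgraphOn S
      (Vcol n m a ∪ Vcol n m c ∪ Hrow n m r) := by
  have hA : Vcol n m a ⊆ Vcol n m a ∪ Vcol n m c ∪ Hrow n m r :=
    (Set.subset_union_left).trans Set.subset_union_left
  have hC : Vcol n m c ⊆ Vcol n m a ∪ Vcol n m c ∪ Hrow n m r :=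
    (Set.subset_union_right).trans Set.subset_union_left
  have hR : Hrow n m r ⊆ Vcol n m a ∪ Vcol n m c ∪ Hrow n m r := Set.subset_union_right
  apply strong_of_hub (P := fun p => p.1 = a ∨ p.1 = c ∨ p.2 = r)
    (h0 := ((a, r) : Fin n × Fin m))
    (Set.union_subset (Set.union_subset (Vcol_sub a) (Vcol_sub c)) (Hrow_sub r))
  · intro v hv; rcases hS v hv with h | h
    · exact Or.inl h
    · exact Or.inr (Or.inl h)
  · rintro ⟨⟨x1, x2⟩, ⟨y1, y2⟩⟩ ((⟨h1, h2, _⟩ | ⟨h1, h2, _⟩) | ⟨h1, h2, _⟩)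
    · exact ⟨Or.inl h1, Or.inl h2⟩
    · exact ⟨Or.inr (Or.inl h1), Or.inr (Or.inl h2)⟩
    · exact ⟨Or.inr (Or.inr h1), Or.inr (Or.inr h2)⟩
  · rintro ⟨p1, p2⟩ (rfl | rfl | rfl)
    · exact reach_col hA p2 r
    · exact (reach_col hC p2 r).trans (reach_row hR p1 a)
    · exact reach_row hR p1 a
  · rintro ⟨p1, p2⟩ (rfl | rfl | rfl)
    · exact reach_col hA r p2
    · exact (reach_row hR a p1).trans (reach_col hC r p2)
    · exact reach_row hR a p1

/-- `Hrow b ∪ Hrow d ∪ Vcol c` is a strong subgraph on any `S` inside the two rows. -/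
lemma strongC {S : Set (Fin n × Fin m)} (b d : Fin m) (c : Fin n)
    (hS : ∀ v ∈ S, v.2 = b ∨ v.2 = d) :
    ((dirCycle n).cartProd (dirCycle m)).IsStrongSubgraphOn S
      (Hrow n m b ∪ Hrow n m d ∪ Vcol n m c) := by
  have hB : Hrow n m b ⊆ Hrow n m b ∪ Hrow n m d ∪ Vcol n m c :=
    (Set.subset_union_left).trans Set.subset_union_left
  have hD : Hrow n m d ⊆ Hrow n m b ∪ Hrow n m d ∪ Vcol n m c :=
    (Set.subset_union_right).trans Set.subset_union_left
  have hC : Vcol n m c ⊆ Hrow n m b ∪ Hrow n m d ∪ Vcol n m c := Set.subset_union_right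
  apply strong_of_hub (P := fun p => p.2 = b ∨ p.2 = d ∨ p.1 = c)
    (h0 := ((c, b) : Fin n × Fin m))
    (Set.union_subset (Set.union_subset (Hrow_sub b) (Hrow_sub d)) (Vcol_sub c))
  · intro v hv; rcases hS v hv with h | h
    · exact Or.inl h
    · exact Or.inr (Or.inl h)
  · rintro ⟨⟨x1, x2⟩, ⟨y1, y2⟩⟩ ((⟨h1, h2, _⟩ | ⟨h1, h2, _⟩) | ⟨h1, h2, _⟩)
    · exact ⟨Or.inl h1, Or.inl h2⟩
    · exact ⟨Or.inr (Or.inl h1), Or.inr (Or.inl h2)⟩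
    · exact ⟨Or.inr (Or.inr h1), Or.inr (Or.inr h2)⟩
  · rintro ⟨p1, p2⟩ (rfl | rfl | rfl)
    · exact reach_row hB p1 c
    · exact (reach_row hD p1 c).trans (reach_col hC p2 b)
    · exact reach_col hC p2 b
  · rintro ⟨p1, p2⟩ (rfl | rfl | rfl)
    · exact reach_row hB c p1
    · exact (reach_col hC b p2).trans (reach_row hD c p1)
    · exact reach_col hC b p2

/-- For any two distinct vertices there are two arc-disjoint strong subgraphs. -/
lemma two_disjoint (hn : 3 ≤ n) (hm : 3 ≤ m) (u v : Fin n × Fin m) (huv : u ≠ v) :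
    ∃ B1 B2 : Set ((Fin n × Fin m) × (Fin n × Fin m)),
      ((dirCycle n).cartProd (dirCycle m)).IsStrongSubgraphOn {u, v} B1 ∧
      ((dirCycle n).cartProd (dirCycle m)).IsStrongSubgraphOn {u, v} B2 ∧
      Disjoint B1 B2 := by
  have hn2 : 2 ≤ n := by omega
  have hm2 : 2 ≤ m := by omega
  obtain ⟨a, b⟩ := u
  obtain ⟨c, d⟩ := v
  by_cases hac : a = c
  · subst hac
    -- same column: B1 = column a, B2 = rows b,d plus column a+1
    refine ⟨Vcol n m a, Hrow n m b ∪ Hrow n m d ∪ Vcol n m (a + 1), ?_, ?_, ?_⟩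
    · apply strong_of_hub (P := fun p => p.1 = a) (h0 := ((a, b) : Fin n × Fin m))
        (Vcol_sub a)
      · rintro w (rfl | rfl) <;> rfl
      · rintro ⟨⟨x1, x2⟩, ⟨y1, y2⟩⟩ ⟨h1, h2, _⟩; exact ⟨h1, h2⟩
      · rintro ⟨p1, p2⟩ rfl; exact reach_col (le_refl _) p2 b
      · rintro ⟨p1, p2⟩ rfl; exact reach_col (le_refl _) b p2
    · apply strongC b d (a + 1)
      rintro w (rfl | rfl)
      · exact Or.inl rfl
      · exact Or.inr rfl
    · refine Disjoint.symm ?_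
      rw [Set.disjoint_union_left, Set.disjoint_union_left]
      exact ⟨⟨disj_HV hn2 b a, disj_HV hn2 d a⟩, disj_VV (add_one_ne hn2 a)⟩
  · by_cases hbd : b = d
    · subst hbd
      -- same row: B1 = row b, B2 = columns a,c plus row b+1
      refine ⟨Hrow n m b, Vcol n m a ∪ Vcol n m c ∪ Hrow n m (b + 1), ?_, ?_, ?_⟩
      · apply strong_of_hub (P := fun p => p.2 = b) (h0 := ((a, b) : Fin n × Fin m))
          (Hrow_sub b)
        · rintro w (rfl | rfl) <;> rfl
        · rintro ⟨⟨x1, x2⟩, ⟨y1, y2⟩⟩ ⟨h1, h2, _⟩; exact ⟨h1, h2⟩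
        · rintro ⟨p1, p2⟩ rfl; exact reach_row (le_refl _) p1 a
        · rintro ⟨p1, p2⟩ rfl; exact reach_row (le_refl _) a p1
      · apply strongB a c (b + 1)
        rintro w (rfl | rfl)
        · exact Or.inl rfl
        · exact Or.inr rfl
      · rw [Set.disjoint_union_right, Set.disjoint_union_right]
        exact ⟨⟨disj_HV hn2 b a, disj_HV hn2 b c⟩, disj_HH (add_one_ne hm2 b).symm⟩
    · -- generic position: B1 = row b ∪ col c, B2 = col a ∪ row d
      refine ⟨Hrow n m b ∪ Vcol n m c, Vcol n m a ∪ Hrow n m d, ?_, ?_, ?_⟩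
      · apply strongA b c
        rintro w (rfl | rfl)
        · exact Or.inl rfl
        · exact Or.inr rfl
      · -- symmetric version of strongA with hub (a, d)
        apply strong_of_hub (P := fun p => p.1 = a ∨ p.2 = d)
          (h0 := ((a, d) : Fin n × Fin m))
          (Set.union_subset (Vcol_sub a) (Hrow_sub d))
        · rintro w (rfl | rfl)
          · exact Or.inl rfl
          · exact Or.inr rfl
        · rintro ⟨⟨x1, x2⟩, ⟨y1, y2⟩⟩ (⟨h1, h2, _⟩ | ⟨h1, h2, _⟩)
          · exact ⟨Or.inl h1, Or.inl h2⟩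
          · exact ⟨Or.inr h1, Or.inr h2⟩
        · rintro ⟨p1, p2⟩ (rfl | rfl)
          · exact reach_col Set.subset_union_left p2 d
          · exact reach_row Set.subset_union_right p1 a
        · rintro ⟨p1, p2⟩ (rfl | rfl)
          · exact reach_col Set.subset_union_left d p2
          · exact reach_row Set.subset_union_right a p1
      · rw [Set.disjoint_union_left, Set.disjoint_union_right,
          Set.disjoint_union_right]
        exact ⟨⟨disj_HV hn2 b a, disj_HH hbd⟩,
          (disj_VV fun h => hac h.symm), (disj_HV hn2 d c).symm⟩

end Stmt12Aux

namespace Stmt12Aux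

variable {n m : ℕ} [NeZero n] [NeZero m]

set_option linter.unusedSectionVars false

lemma pair_bound (u v : Fin n × Fin m) (huv : u ≠ v) :
    ∀ k ∈ {k | ∃ f : Fin k → Set ((Fin n × Fin m) × (Fin n × Fin m)),
      (∀ i, ((dirCycle n).cartProd (dirCycle m)).IsStrongSubgraphOn {u, v} (f i)) ∧
      ∀ i j, i ≠ j → Disjoint (f i) (f j)}, k ≤ 2 := by
  rintro k ⟨f, hstrong, hdisj⟩
  by_contra hk
  push_neg at hk
  have step : ∀ i : Fin k, ∃ c, (u, c) ∈ f i := by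
    intro i
    have hreach := (hstrong i).2 u (Set.mem_union_left _ (Set.mem_insert _ _)) v
      (Set.mem_union_left _ (Set.mem_insert_iff.mpr (Or.inr rfl)))
    rcases hreach.cases_head with h | ⟨c, hc, _⟩
    · exact absurd h huv
    · exact ⟨c, hc⟩
  choose g hg using step
  have gmem : ∀ i, g i = (u.1 + 1, u.2) ∨ g i = (u.1, u.2 + 1) := by
    intro i
    have hmem := (hstrong i).1 (hg i)
    simp only [Digraph.ArcSet, Digraph.cartProd, Set.mem_setOf_eq] at hmem
    rcases hmem with ⟨h1, h2⟩ | ⟨h1, h2⟩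
    · exact Or.inl (Prod.ext_iff.mpr ⟨(dirCycle_adj_iff n _ _).mp h1, h2.symm⟩)
    · exact Or.inr (Prod.ext_iff.mpr ⟨h1.symm, (dirCycle_adj_iff m _ _).mp h2⟩)
  have ginj : ∀ i j : Fin k, i ≠ j → g i ≠ g j := by
    intro i j hij he
    exact Set.disjoint_left.mp (hdisj i j hij) (hg i) (he ▸ hg j)
  have h01 : (⟨0, by omega⟩ : Fin k) ≠ ⟨1, by omega⟩ := by simp [Fin.ext_iff]
  have h02 : (⟨0, by omega⟩ : Fin k) ≠ ⟨2, by omega⟩ := by simp [Fin.ext_iff]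
  have h12 : (⟨1, by omega⟩ : Fin k) ≠ ⟨2, by omega⟩ := by simp [Fin.ext_iff]
  rcases gmem ⟨0, by omega⟩ with h0 | h0 <;> rcases gmem ⟨1, by omega⟩ with h1 | h1 <;>
    rcases gmem ⟨2, by omega⟩ with h2 | h2
  · exact ginj _ _ h01 (h0.trans h1.symm)
  · exact ginj _ _ h01 (h0.trans h1.symm)
  · exact ginj _ _ h02 (h0.trans h2.symm)
  · exact ginj _ _ h12 (h1.trans h2.symm)
  · exact ginj _ _ h12 (h1.trans h2.symm)
  · exact ginj _ _ h02 (h0.trans h2.symm)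
  · exact ginj _ _ h01 (h0.trans h1.symm)
  · exact ginj _ _ h01 (h0.trans h1.symm)

lemma lambdaS_pair (hn : 3 ≤ n) (hm : 3 ≤ m) (u v : Fin n × Fin m) (huv : u ≠ v) :
    ((dirCycle n).cartProd (dirCycle m)).lambdaS {u, v} = 2 := by
  obtain ⟨B1, B2, hB1, hB2, hdisj⟩ := two_disjoint hn hm u v huv
  unfold Digraph.lambdaS
  have mem2 : 2 ∈ {k | ∃ f : Fin k → Set ((Fin n × Fin m) × (Fin n × Fin m)),
      (∀ i, ((dirCycle n).cartProd (dirCycle m)).IsStrongSubgraphOn {u, v} (f i)) ∧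
      ∀ i j, i ≠ j → Disjoint (f i) (f j)} := by
    refine ⟨![B1, B2], ?_, ?_⟩
    · intro i
      fin_cases i
      · simpa using hB1
      · simpa using hB2
    · intro i j hij
      fin_cases i <;> fin_cases j <;>
        first
          | exact absurd rfl hij
          | simpa using hdisj
          | simpa using hdisj.symm
  exact le_antisymm (csSup_le ⟨2, mem2⟩ (pair_bound u v huv))
    (le_csSup ⟨2, pair_bound u v huv⟩ mem2)

end Stmt12Aux

open Stmt12Aux in
theorem stmt12 (n m : ℕ) (hn : 3 ≤ n) (hm : 3 ≤ m) :
    ((dirCycle n).cartProd (dirCycle m)).lambdaK 2 = 2 := by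
  have hNn : NeZero n := ⟨by omega⟩
  have hNm : NeZero m := ⟨by omega⟩
  unfold Digraph.lambdaK
  have hne : ((0 : Fin n), (0 : Fin m)) ≠ ((1 : Fin n), (0 : Fin m)) := by
    intro h
    have h2 := congrArg (fun p : Fin n × Fin m => (p.1 : ℕ)) h
    simp [Fin.val_one', Nat.mod_eq_of_lt (show 1 < n by omega)] at h2
  have mem2 : 2 ∈ {k | ∃ S : Set (Fin n × Fin m), S.ncard = 2 ∧
      ((dirCycle n).cartProd (dirCycle m)).lambdaS S = k} :=
    ⟨{((0 : Fin n), (0 : Fin m)), ((1 : Fin n), (0 : Fin m))},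
      Set.ncard_pair hne, lambdaS_pair hn hm _ _ hne⟩
  refine le_antisymm (Nat.sInf_le mem2) (le_csInf ⟨2, mem2⟩ ?_)
  rintro x ⟨S, hS, rfl⟩
  obtain ⟨a, b, hab, rfl⟩ := Set.ncard_eq_two.mp hS
  rw [lambdaS_pair hn hm a b hab]
end
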